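/- arXiv:2009.14774 — 12 statements merged into one kernel-verified Lean document; each statement's English description precedes it below -/
import Mathlib

section
/- Let f : ℝ^d → ℝ be a convex differentiable function and β* ∈ ℝ^d. Suppose f is locally κ-strongly convex at β* within radius R > 0, i.e., for all u with ‖u‖ ≤ R, f(β* + u) ≥ f(β*) + ⟨∇f(β*), u⟩ + (κ/2)‖u‖². If ‖∇f(β*)‖ < (1/2)·R·κ, then every vector β with f(β) ≤ f(β*) satisfies ‖β − β*‖ ≤ 2‖∇f(β*)‖/κ. -/
open scoped RealInnerProductSpace

theorem huber_error_bound_from_strong_convexity {d : ℕ}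
    (f : EuclideanSpace ℝ (Fin d) → ℝ)
    (hconv : ConvexOn ℝ Set.univ f) (hdiff : Differentiable ℝ f)
    (βstar : EuclideanSpace ℝ (Fin d)) (κ R : ℝ) (hκ : 0 < κ) (hR : 0 < R)
    (hsc : ∀ u : EuclideanSpace ℝ (Fin d), ‖u‖ ≤ R →
      f βstar + ⟪gradient f βstar, u⟫ + κ / 2 * ‖u‖ ^ 2 ≤ f (βstar + u))
    (hgrad : ‖gradient f βstar‖ < 1 / 2 * R * κ) :
    ∀ β : EuclideanSpace ℝ (Fin d), f β ≤ f βstar →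
      ‖β - βstar‖ ≤ 2 * ‖gradient f βstar‖ / κ := by
  intro β hβ
  set g := gradient f βstar with hg
  by_contra hcon
  push_neg at hcon
  set v := β - βstar with hv
  have hgnn : (0:ℝ) ≤ ‖g‖ := norm_nonneg _
  have hrnn : (0:ℝ) ≤ 2 * ‖g‖ / κ := by positivity
  have hn : (0:ℝ) < ‖v‖ := lt_of_le_of_lt hrnn hcon
  have hrR : 2 * ‖g‖ / κ < R := by
    rw [div_lt_iff₀ hκ]; nlinarith
  set s := min ‖v‖ R with hs
  have hsR : s ≤ R := min_le_right _ _
  have hspos : 0 < s := lt_min hn hR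
  have hrs : 2 * ‖g‖ / κ < s := lt_min hcon hrR
  set t := s / ‖v‖ with ht
  have htpos : 0 < t := div_pos hspos hn
  have ht1 : t ≤ 1 := by
    rw [ht, div_le_one hn]; exact min_le_left _ _
  set u := t • v with hu
  have hnu : ‖u‖ = s := by
    rw [hu, norm_smul, Real.norm_eq_abs, abs_of_pos htpos, ht,
      div_mul_cancel₀ _ (ne_of_gt hn)]
  have hmem : βstar + u = (1 - t) • βstar + t • β := by
    rw [hu, hv]; module
  have hcvx : f (βstar + u) ≤ f βstar := by
    rw [hmem]
    have := hconv.2 (Set.mem_univ βstar) (Set.mem_univ β)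
      (by linarith : (0:ℝ) ≤ 1 - t) (le_of_lt htpos) (by ring)
    simp only [smul_eq_mul] at this
    nlinarith
  have hsc' := hsc u (hnu ▸ hsR)
  rw [hnu] at hsc'
  have hinner : -(‖g‖ * s) ≤ ⟪g, u⟫ := by
    have := abs_real_inner_le_norm g u
    rw [hnu] at this
    have := neg_abs_le ⟪g, u⟫
    linarith [abs_le.mp ((abs_real_inner_le_norm g u).trans (by rw [hnu]))]
  have : κ / 2 * s ^ 2 ≤ ‖g‖ * s := by nlinarith
  have : s ≤ 2 * ‖g‖ / κ := by
    rw [le_div_iff₀ hκ]; nlinarith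
  linarith
end

section
/- Let f : ℝ^d → ℝ be convex differentiable, locally κ-strongly convex at β* within radius R > 0. If ‖∇f(β*)‖ < 0.49·R·κ, then every vector β with f(β) ≤ f(β*) + ε, where ε = 0.01·‖∇f(β*)‖²/κ, satisfies ‖β − β*‖ ≤ 2.01·‖∇f(β*)‖/κ. -/
open scoped RealInnerProductSpace

set_option maxHeartbeats 1000000 in
theorem huber_error_bound_from_strong_convexity_approx {d : ℕ}
    (f : EuclideanSpace ℝ (Fin d) → ℝ)
    (hconv : ConvexOn ℝ Set.univ f) (hdiff : Differentiable ℝ f)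
    (βstar : EuclideanSpace ℝ (Fin d)) (κ R : ℝ) (hκ : 0 < κ) (hR : 0 < R)
    (hsc : ∀ u : EuclideanSpace ℝ (Fin d), ‖u‖ ≤ R →
      f βstar + ⟪gradient f βstar, u⟫ + κ / 2 * ‖u‖ ^ 2 ≤ f (βstar + u))
    (hgrad : ‖gradient f βstar‖ < 0.49 * R * κ) :
    ∀ β : EuclideanSpace ℝ (Fin d),
      f β ≤ f βstar + 0.01 * ‖gradient f βstar‖ ^ 2 / κ →
      ‖β - βstar‖ ≤ 2.01 * ‖gradient f βstar‖ / κ := by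
  intro β hβ
  by_contra hcon
  push_neg at hcon
  set g := gradient f βstar with hg
  set G := ‖g‖ with hG
  have hG0 : 0 ≤ G := norm_nonneg _
  set u : EuclideanSpace ℝ (Fin d) := β - βstar with hu
  set n := ‖u‖ with hn
  have hr0 : 0 ≤ 2.01 * G / κ := by positivity
  have hn0 : 0 < n := lt_of_le_of_lt hr0 hcon
  set s := min n R with hs
  have hs0 : 0 < s := lt_min hn0 hR
  have hsR : s ≤ R := min_le_right _ _
  have hsn : s ≤ n := min_le_left _ _
  have hRr : 2.01 * G / κ < R := by
    rw [div_lt_iff₀ hκ]; nlinarith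
  have hsr : 2.01 * G / κ < s := lt_min hcon hRr
  have hκs : 2.01 * G < κ * s := by
    rw [div_lt_iff₀ hκ] at hsr; linarith
  set t := s / n with ht
  have ht0 : 0 < t := div_pos hs0 hn0
  have ht1 : t ≤ 1 := (div_le_one hn0).mpr hsn
  have htn : t * n = s := div_mul_cancel₀ _ hn0.ne'
  set v : EuclideanSpace ℝ (Fin d) := t • u with hv
  have hvnorm : ‖v‖ = s := by
    rw [hv, norm_smul, Real.norm_eq_abs, abs_of_pos ht0, ← hn, htn]
  have hA := hsc v (by rw [hvnorm]; exact hsR)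
  rw [hvnorm] at hA
  have hip : ⟪g, v⟫ = t * ⟪g, u⟫ := real_inner_smul_right g u t
  have hipb : -(G * n) ≤ ⟪g, u⟫ := by
    have := abs_real_inner_le_norm g u
    rw [abs_le] at this
    exact this.1
  have heq : βstar + v = (1 - t) • βstar + t • β := by
    rw [hv, hu]; module
  have hB := hconv.2 (Set.mem_univ βstar) (Set.mem_univ β)
    (by linarith : (0:ℝ) ≤ 1 - t) ht0.le (by ring)
  rw [← heq] at hB
  -- combine
  have hchain : -(G * s) + κ / 2 * s ^ 2 ≤ 0.01 * G ^ 2 / κ := by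
    have h1 : t * ⟪g, u⟫ ≥ t * (-(G * n)) := by
      apply mul_le_mul_of_nonneg_left hipb ht0.le
    have h2 : t * (-(G * n)) = -(G * s) := by
      rw [← htn]; ring
    have h3 : t * (f β - f βstar) ≤ t * (0.01 * G ^ 2 / κ) := by
      apply mul_le_mul_of_nonneg_left (by linarith) ht0.le
    have h4 : t * (0.01 * G ^ 2 / κ) ≤ 0.01 * G ^ 2 / κ := by
      have hε : 0 ≤ 0.01 * G ^ 2 / κ := by positivity
      nlinarith
    rw [hip] at hA
    simp only [smul_eq_mul] at hB
    have hexp : (1 - t) * f βstar + t * f β = f βstar + t * (f β - f βstar) := by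
      ring
    rw [hexp] at hB
    linarith
  rw [le_div_iff₀ hκ] at hchain
  have hx0 : 0 < κ * s := mul_pos hκ hs0
  have h1 : 0 < (κ * s - 2.01 * G) * (κ * s) := mul_pos (by linarith) hx0
  have h2 : G * (2.01 * G) ≤ G * (κ * s) := mul_le_mul_of_nonneg_left hκs.le hG0
  nlinarith [h1, h2, sq_nonneg G]
end

section
/- For all h, η ∈ ℝ, the Huber penalty Φ satisfies Φ(η + h) − Φ(η) − Φ'(η)·h = h² · ∫₀¹ (1 − t) · 1[|η + t·h| ≤ 2] dt ≥ (1/2) · 1[|η| ≤ 1] · 1[|h| ≤ 1] · h². -/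
open MeasureTheory


/-- The Huber penalty with transition points `±2`. -/
noncomputable def huberPenalty (t : ℝ) : ℝ := if |t| ≤ 2 then t ^ 2 / 2 else 2 * |t| - 2

/-- The derivative of the Huber penalty. -/
noncomputable def huberPenalty' (t : ℝ) : ℝ := Real.sign t * min |t| 2


lemma huberPenalty'_eq (x : ℝ) : huberPenalty' x = max (-2) (min x 2) := by
  unfold huberPenalty'
  rcases lt_trichotomy x 0 with hx | hx | hx
  · rw [Real.sign_of_neg hx, abs_of_neg hx, min_def, min_def, max_def]
    split_ifs <;> linarith
  · simp [hx]
  · rw [Real.sign_of_pos hx, abs_of_pos hx, min_def, max_def]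
    split_ifs <;> linarith

lemma huber_quad {t : ℝ} (ht : |t| ≤ 2) : huberPenalty t = t ^ 2 / 2 := if_pos ht

lemma huber_lin_pos {t : ℝ} (ht : 2 ≤ t) : huberPenalty t = 2 * t - 2 := by
  rcases eq_or_lt_of_le ht with rfl | ht'
  · rw [huber_quad (by norm_num)]; norm_num
  · rw [huberPenalty, if_neg (by rw [abs_of_pos (by linarith)]; linarith),
      abs_of_pos (by linarith)]

lemma huber_lin_neg {t : ℝ} (ht : t ≤ -2) : huberPenalty t = -2 * t - 2 := by
  rcases eq_or_lt_of_le ht with h | ht'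
  · subst h; rw [huber_quad (by rw [abs_of_nonpos] <;> norm_num)]; norm_num
  · rw [huberPenalty, if_neg (by rw [abs_of_neg (by linarith)]; linarith),
      abs_of_neg (by linarith)]
    ring

lemma quad_deriv (x : ℝ) : HasDerivAt (fun t : ℝ => t ^ 2 / 2) x x := by
  simpa using ((hasDerivAt_pow 2 x).div_const 2)

lemma linp_deriv (x : ℝ) : HasDerivAt (fun t : ℝ => 2 * t - 2) 2 x := by
  simpa using ((hasDerivAt_id x).const_mul (2:ℝ)).sub_const 2

lemma linn_deriv (x : ℝ) : HasDerivAt (fun t : ℝ => -2 * t - 2) (-2) x := by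
  simpa using ((hasDerivAt_id x).const_mul (-2:ℝ)).sub_const 2

lemma huber_hasDerivAt (x : ℝ) : HasDerivAt huberPenalty (huberPenalty' x) x := by
  rw [huberPenalty'_eq]
  rcases lt_trichotomy (|x|) 2 with hx | hx | hx
  · have hev : huberPenalty =ᶠ[nhds x] fun t => t ^ 2 / 2 := by
      filter_upwards [eventually_abs_sub_lt x (by linarith : (0:ℝ) < 2 - |x|)] with t ht
      exact huber_quad (by have := abs_sub_abs_le_abs_sub t x; linarith [abs_sub_comm t x ▸ ht])
    have hx2 : max (-2) (min x 2) = x := by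
      rcases abs_lt.1 hx with ⟨h1, h2⟩
      rw [min_eq_left h2.le, max_eq_right h1.le]
    rw [hx2]
    exact (quad_deriv x).congr_of_eventuallyEq hev
  · rcases (abs_eq (by norm_num : (0:ℝ) ≤ 2)).1 hx with h2 | h2
    · subst h2
      have hleft : HasDerivWithinAt huberPenalty 2 (Set.Icc (-2) 2) 2 :=
        ((quad_deriv 2).hasDerivWithinAt).congr
          (fun t ht => huber_quad (abs_le.2 ⟨ht.1, ht.2⟩)) (huber_quad (by norm_num))
      have hright : HasDerivWithinAt huberPenalty 2 (Set.Ici 2) 2 :=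
        ((linp_deriv 2).hasDerivWithinAt).congr (fun t ht => huber_lin_pos ht)
          (huber_lin_pos le_rfl)
      have := (hleft.union hright).hasDerivAt (by
        rw [Set.Icc_union_Ici_eq_Ici (by norm_num)]
        exact Ici_mem_nhds (by norm_num))
      simpa using this
    · subst h2
      have hleft : HasDerivWithinAt huberPenalty (-2) (Set.Iic (-2)) (-2) :=
        ((linn_deriv (-2)).hasDerivWithinAt).congr (fun t ht => huber_lin_neg ht)
          (huber_lin_neg le_rfl)
      have hright : HasDerivWithinAt huberPenalty (-2) (Set.Icc (-2) 2) (-2) :=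
        ((quad_deriv (-2)).hasDerivWithinAt).congr
          (fun t ht => huber_quad (abs_le.2 ⟨ht.1, ht.2⟩)) (huber_quad (by norm_num))
      have := (hleft.union hright).hasDerivAt (by
        rw [Set.Iic_union_Icc_eq_Iic (by norm_num)]
        exact Iic_mem_nhds (by norm_num))
      simpa using this
  · rcases lt_abs.mp hx with h2 | h2
    · have hev : huberPenalty =ᶠ[nhds x] fun t => 2 * t - 2 := by
        filter_upwards [Ioi_mem_nhds h2] with t ht
        exact huber_lin_pos (le_of_lt ht)
      have hx2 : max (-2) (min x 2) = 2 := by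
        rw [min_eq_right h2.le, max_eq_right (by norm_num)]
      rw [hx2]
      exact (linp_deriv x).congr_of_eventuallyEq hev
    · have h2' : x < -2 := by linarith
      have hev : huberPenalty =ᶠ[nhds x] fun t => -2 * t - 2 := by
        filter_upwards [Iio_mem_nhds h2'] with t ht
        exact huber_lin_neg (le_of_lt ht)
      have hx2 : max (-2) (min x 2) = -2 := by
        rw [min_eq_left (by linarith), max_eq_left (by linarith)]
      rw [hx2]
      exact (linn_deriv x).congr_of_eventuallyEq hev

lemma affine_deriv (η h t : ℝ) : HasDerivAt (fun s : ℝ => η + s * h) h t := by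
  simpa using (hasDerivAt_mul_const h (x := t)).const_add η

lemma clamp_right (η h t : ℝ) :
    HasDerivWithinAt (fun s => max (-2) (min (η + s * h) 2))
      (h * (if |η + t * h| < 2 ∨ (|η + t * h| = 2 ∧ (η + t * h) * h < 0) then (1:ℝ) else 0))
      (Set.Ioi t) t := by
  set x := η + t * h with hxdef
  rcases lt_trichotomy (|x|) 2 with hx | hx | hx
  · -- interior: clamp is identity near x
    rw [if_pos (Or.inl hx), mul_one]
    have hev : ∀ᶠ s in nhds t, max (-2) (min (η + s * h) 2) = η + s * h := by
      have hcont : Continuous fun s : ℝ => η + s * h := by continuity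
      filter_upwards [hcont.continuousAt.preimage_mem_nhds
        (Ioo_mem_nhds (abs_lt.1 hx).1 (abs_lt.1 hx).2)] with s hs
      rw [min_eq_left hs.2.le, max_eq_right hs.1.le]
    exact (((affine_deriv η h t).congr_of_eventuallyEq
      (by filter_upwards [hev] with s hs using hs)).hasDerivWithinAt)
  · -- boundary
    rcases (abs_eq (by norm_num : (0:ℝ) ≤ 2)).1 hx with h2 | h2
    · -- x = 2
      rcases lt_trichotomy (x * h) 0 with hxh | hxh | hxh
      · -- h < 0 : moving inward
        rw [if_pos (Or.inr ⟨hx, hxh⟩), mul_one]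
        have hneg : h < 0 := by nlinarith [h2 ▸ hxh]
        have hev : ∀ᶠ s in nhdsWithin t (Set.Ioi t),
            max (-2) (min (η + s * h) 2) = η + s * h := by
          filter_upwards [mem_nhdsWithin_of_mem_nhds (Iio_mem_nhds
            (show t < t - 4 / h by have : 4 / h < 0 := div_neg_of_pos_of_neg (by norm_num) hneg
                                   linarith)), self_mem_nhdsWithin] with s hs1 hs2
          have h1 : η + s * h < 2 := by
            have : (s - t) * h < 0 := mul_neg_of_pos_of_neg (by simpa using hs2) hneg
            nlinarith [h2]
          have h2' : -2 ≤ η + s * h := by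
            have hs' : s - t < -4 / h := by
              simp only [Set.mem_Iio] at hs1; rw [neg_div]; linarith
            have hm := mul_lt_mul_of_neg_right hs' hneg
            have h4 : -4 / h * h = -4 := div_mul_cancel₀ (-4) hneg.ne
            nlinarith [h2]
          rw [min_eq_left h1.le, max_eq_right h2']
        refine ((affine_deriv η h t).hasDerivWithinAt).congr_of_eventuallyEq
          (by filter_upwards [hev] with s hs using hs) ?_
        rw [← hxdef, h2, min_eq_left (by norm_num), max_eq_right (by norm_num)]
      · -- h = 0
        have hz : h = 0 := by
          rcases mul_eq_zero.1 hxh with hc | hc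
          · exfalso; rw [hc] at h2; norm_num at h2
          · exact hc
        subst hz
        simp only [mul_zero, add_zero, zero_mul]
        exact hasDerivWithinAt_const t _ _
      · -- h > 0 : moving outward
        rw [if_neg (by push_neg; exact ⟨by simp [hx], fun _ => le_of_lt hxh⟩), mul_zero]
        have hpos : 0 < h := by nlinarith [h2 ▸ hxh]
        have hev : ∀ᶠ s in nhdsWithin t (Set.Ioi t),
            max (-2) (min (η + s * h) 2) = 2 := by
          filter_upwards [self_mem_nhdsWithin] with s hs
          have : 2 ≤ η + s * h := by
            have : 0 ≤ (s - t) * h := le_of_lt (mul_pos (by simpa using hs) hpos)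
            nlinarith [h2]
          rw [min_eq_right this, max_eq_right (by norm_num)]
        refine (hasDerivWithinAt_const t _ (2:ℝ)).congr_of_eventuallyEq
          (by filter_upwards [hev] with s hs using hs) ?_
        rw [← hxdef, h2, min_eq_left (by norm_num), max_eq_right (by norm_num)]
    · -- x = -2
      rcases lt_trichotomy (x * h) 0 with hxh | hxh | hxh
      · -- h > 0 : moving inward
        rw [if_pos (Or.inr ⟨hx, hxh⟩), mul_one]
        have hpos : 0 < h := by nlinarith [h2 ▸ hxh]
        have hev : ∀ᶠ s in nhdsWithin t (Set.Ioi t),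
            max (-2) (min (η + s * h) 2) = η + s * h := by
          filter_upwards [mem_nhdsWithin_of_mem_nhds (Iio_mem_nhds
            (show t < t + 4 / h by have : 0 < 4 / h := div_pos (by norm_num) hpos
                                   linarith)), self_mem_nhdsWithin] with s hs1 hs2
          have h1 : -2 < η + s * h := by
            have : 0 < (s - t) * h := mul_pos (by simpa using hs2) hpos
            nlinarith [h2]
          have h2' : η + s * h ≤ 2 := by
            simp only [Set.mem_Iio] at hs1
            have : (s - t) * h < 4 := by
              have : s - t < 4 / h := by linarith
              calc (s - t) * h < (4 / h) * h := by exact mul_lt_mul_of_pos_right this hpos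
                _ = 4 := by field_simp
            nlinarith [h2]
          rw [min_eq_left h2', max_eq_right h1.le]
        refine ((affine_deriv η h t).hasDerivWithinAt).congr_of_eventuallyEq
          (by filter_upwards [hev] with s hs using hs) ?_
        rw [← hxdef, h2, min_eq_left (by norm_num), max_eq_right (by norm_num)]
      · -- h = 0
        have hz : h = 0 := by
          rcases mul_eq_zero.1 hxh with hc | hc
          · exfalso; rw [hc] at h2; norm_num at h2
          · exact hc
        subst hz
        simp only [mul_zero, add_zero, zero_mul]
        exact hasDerivWithinAt_const t _ _
      · -- h < 0 : moving outward
        rw [if_neg (by push_neg; exact ⟨by simp [hx], fun _ => le_of_lt hxh⟩), mul_zero]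
        have hneg : h < 0 := by nlinarith [h2 ▸ hxh]
        have hev : ∀ᶠ s in nhdsWithin t (Set.Ioi t),
            max (-2) (min (η + s * h) 2) = -2 := by
          filter_upwards [self_mem_nhdsWithin] with s hs
          have : η + s * h ≤ -2 := by
            have : (s - t) * h < 0 := mul_neg_of_pos_of_neg (by simpa using hs) hneg
            nlinarith [h2]
          rw [max_eq_left (min_le_of_left_le this)]
        refine (hasDerivWithinAt_const t _ (-2:ℝ)).congr_of_eventuallyEq
          (by filter_upwards [hev] with s hs using hs) ?_
        rw [← hxdef, h2]
        rw [min_eq_left (by norm_num), max_eq_left (by norm_num)]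
  · -- outside: clamp locally constant
    rw [if_neg (by push_neg; exact ⟨by linarith, fun he => absurd he (by linarith)⟩), mul_zero]
    rcases lt_abs.mp hx with h2 | h2
    · have hev : ∀ᶠ s in nhds t, max (-2) (min (η + s * h) 2) = 2 := by
        have hcont : Continuous fun s : ℝ => η + s * h := by continuity
        filter_upwards [hcont.continuousAt.preimage_mem_nhds (Ioi_mem_nhds h2)] with s hs
        rw [min_eq_right (le_of_lt hs), max_eq_right (by norm_num)]
      refine ((hasDerivAt_const t (2:ℝ)).congr_of_eventuallyEq
        (by filter_upwards [hev] with s hs using hs)).hasDerivWithinAt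
    · have h2' : x < -2 := by linarith
      have hev : ∀ᶠ s in nhds t, max (-2) (min (η + s * h) 2) = -2 := by
        have hcont : Continuous fun s : ℝ => η + s * h := by continuity
        filter_upwards [hcont.continuousAt.preimage_mem_nhds (Iio_mem_nhds h2')] with s hs
        rw [max_eq_left (min_le_of_left_le (le_of_lt hs))]
      refine ((hasDerivAt_const t (-2:ℝ)).congr_of_eventuallyEq
        (by filter_upwards [hev] with s hs using hs)).hasDerivWithinAt

theorem second_order_behavior_of_huber_penalty (h η : ℝ) :
    (huberPenalty (η + h) - huberPenalty η - huberPenalty' η * h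
      = h ^ 2 * ∫ t in (0:ℝ)..1, (1 - t) * (if |η + t * h| ≤ 2 then (1:ℝ) else 0)) ∧
    (1 / 2 * (if |η| ≤ 1 then (1:ℝ) else 0) * (if |h| ≤ 1 then (1:ℝ) else 0) * h ^ 2
      ≤ h ^ 2 * ∫ t in (0:ℝ)..1, (1 - t) * (if |η + t * h| ≤ 2 then (1:ℝ) else 0)) := by
  constructor
  · -- equality
    by_cases hh : h = 0
    · subst hh; norm_num
    set D : ℝ → ℝ := fun t =>
      if |η + t * h| < 2 ∨ (|η + t * h| = 2 ∧ (η + t * h) * h < 0) then (1:ℝ) else 0 with hD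
    set g : ℝ → ℝ := fun t =>
      huberPenalty (η + t * h) + (1 - t) * h * (max (-2) (min (η + t * h) 2)) with hg
    have hderiv : ∀ t : ℝ, HasDerivWithinAt g ((1 - t) * h ^ 2 * D t) (Set.Ioi t) t := by
      intro t
      have h1 : HasDerivAt (fun s => huberPenalty (η + s * h))
          (max (-2) (min (η + t * h) 2) * h) t := by
        have := (huber_hasDerivAt (η + t * h)).comp t (affine_deriv η h t)
        rwa [huberPenalty'_eq] at this
      have h2 : HasDerivWithinAt (fun s : ℝ => (1 - s) * h) (-h) (Set.Ioi t) t := by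
        have : HasDerivAt (fun s : ℝ => (1 - s) * h) ((-1) * h) t :=
          (((hasDerivAt_id t).const_sub 1).mul_const h)
        simpa using this.hasDerivWithinAt
      have h3 := clamp_right η h t
      have := h1.hasDerivWithinAt.add (h2.mul h3)
      refine HasDerivWithinAt.congr_deriv this ?_
      simp only [hD]
      ring
    have hcont : Continuous g := by
      have hH : Continuous huberPenalty := by
        rw [continuous_iff_continuousAt]; exact fun x => (huber_hasDerivAt x).continuousAt
      exact (hH.comp (by continuity)).add
        (((continuous_const.sub continuous_id).mul continuous_const).mul
          (continuous_const.max ((continuous_const.add (continuous_id.mul continuous_const)).min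
            continuous_const)))
    have hS : MeasurableSet {t : ℝ | |η + t * h| < 2 ∨ (|η + t * h| = 2 ∧ (η + t * h) * h < 0)} := by
      have c1 : Continuous fun t : ℝ => |η + t * h| := by continuity
      have c2 : Continuous fun t : ℝ => (η + t * h) * h := by continuity
      refine MeasurableSet.union ?_ (MeasurableSet.inter ?_ ?_)
      · exact measurableSet_lt c1.measurable measurable_const
      · exact measurableSet_eq_fun c1.measurable measurable_const
      · exact measurableSet_lt c2.measurable measurable_const
    have hmeasD : Measurable D := Measurable.ite hS measurable_const measurable_const
    have hint : IntervalIntegrable (fun t => (1 - t) * h ^ 2 * D t) volume 0 1 := by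
      apply IntervalIntegrable.mono_fun (intervalIntegrable_const (c := h ^ 2))
      · exact (((continuous_const.sub continuous_id).mul continuous_const).measurable.mul
          hmeasD).aestronglyMeasurable
      · rw [Set.uIoc_of_le (by norm_num : (0:ℝ) ≤ 1)]
        filter_upwards [MeasureTheory.ae_restrict_mem measurableSet_Ioc] with t ht
        have hD1 : |D t| ≤ 1 := by
          simp only [hD]; split_ifs <;> norm_num
        have h1t : |1 - t| ≤ 1 := by
          rw [abs_le]; constructor <;> [linarith [ht.2]; linarith [ht.1]]
        calc ‖(1 - t) * h ^ 2 * D t‖ = |1 - t| * |h ^ 2| * |D t| := by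
              simp [abs_mul]
          _ ≤ 1 * |h ^ 2| * 1 := by
              apply mul_le_mul (mul_le_mul h1t le_rfl (abs_nonneg _) (by norm_num)) hD1
                (abs_nonneg _) (by positivity)
          _ = ‖h ^ 2‖ := by simp
    have key := intervalIntegral.integral_eq_sub_of_hasDeriv_right_of_le
      (by norm_num : (0:ℝ) ≤ 1) hcont.continuousOn (fun t _ => hderiv t) hint
    have hg1 : g 1 = huberPenalty (η + h) := by simp [hg]
    have hg0 : g 0 = huberPenalty η + h * huberPenalty' η := by
      simp only [hg]; rw [huberPenalty'_eq]; norm_num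
    have hae : ∀ᵐ t : ℝ, (1 - t) * h ^ 2 * D t
        = h ^ 2 * ((1 - t) * (if |η + t * h| ≤ 2 then (1:ℝ) else 0)) := by
      have hfin : (volume : MeasureTheory.Measure ℝ)
          {t : ℝ | η + t * h = 2 ∨ η + t * h = -2} = 0 := by
        have hsub : {t : ℝ | η + t * h = 2 ∨ η + t * h = -2}
            ⊆ {(2 - η) / h, (-2 - η) / h} := by
          intro t ht
          rcases ht with h1 | h1
          · left; field_simp at h1 ⊢; linarith
          · right; rw [Set.mem_singleton_iff, eq_div_iff hh]; linarith
        exact MeasureTheory.measure_mono_null hsub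
          (Set.Finite.measure_zero ((Set.finite_singleton _).insert _) _)
      filter_upwards [MeasureTheory.measure_eq_zero_iff_ae_notMem.mp hfin] with t ht
      have ht' : ¬(η + t * h = 2 ∨ η + t * h = -2) := ht
      push_neg at ht'
      clear ht
      rename' ht' => ht
      by_cases hc : |η + t * h| < 2
      · simp only [hD, if_pos (Or.inl hc), if_pos hc.le]; ring
      · have hne : |η + t * h| ≠ 2 := by
          intro he
          rcases (abs_eq (by norm_num : (0:ℝ) ≤ 2)).1 he with h1 | h1
          · exact ht.1 h1
          · exact ht.2 h1
        have hgt : ¬ |η + t * h| ≤ 2 := fun hle => hne (le_antisymm hle (not_lt.1 hc))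
        simp only [hD, if_neg (show ¬(|η + t * h| < 2 ∨ (|η + t * h| = 2 ∧ (η + t * h) * h < 0))
          from fun hor => hor.elim hc (fun hb => hne hb.1)), if_neg hgt]
        ring
    have hcongr : (∫ t in (0:ℝ)..1, (1 - t) * h ^ 2 * D t)
        = ∫ t in (0:ℝ)..1, h ^ 2 * ((1 - t) * (if |η + t * h| ≤ 2 then (1:ℝ) else 0)) :=
      intervalIntegral.integral_congr_ae (hae.mono fun t ht _ => ht)
    rw [intervalIntegral.integral_const_mul] at hcongr
    rw [key, hg1, hg0] at hcongr
    linarith [hcongr]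
  · -- inequality
    by_cases hη : |η| ≤ 1
    · by_cases hhb : |h| ≤ 1
      · have hcongr : ∀ t ∈ Set.uIcc (0:ℝ) 1,
            (1 - t) * (if |η + t * h| ≤ 2 then (1:ℝ) else 0) = 1 - t := by
          intro t ht
          rw [Set.uIcc_of_le (by norm_num : (0:ℝ) ≤ 1)] at ht
          have habs : |η + t * h| ≤ 2 := by
            calc |η + t * h| ≤ |η| + |t * h| := abs_add_le _ _
              _ ≤ 1 + 1 := by
                  gcongr
                  rw [abs_mul, abs_of_nonneg ht.1]
                  calc t * |h| ≤ 1 * 1 := by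
                        apply mul_le_mul ht.2 hhb (abs_nonneg _) (by norm_num)
                    _ = 1 := by norm_num
              _ = 2 := by norm_num
          rw [if_pos habs, mul_one]
        rw [intervalIntegral.integral_congr hcongr]
        have hval : (∫ t in (0:ℝ)..1, (1 - t)) = 1 / 2 := by
          rw [intervalIntegral.integral_sub intervalIntegrable_const intervalIntegral.intervalIntegrable_id]
          simp [integral_id]
          norm_num
        rw [hval, if_pos hη, if_pos hhb]
        ring_nf
        linarith
      · have hnn : 0 ≤ h ^ 2 * ∫ t in (0:ℝ)..1,
            (1 - t) * (if |η + t * h| ≤ 2 then (1:ℝ) else 0) := by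
          apply mul_nonneg (sq_nonneg _)
          apply intervalIntegral.integral_nonneg (by norm_num : (0:ℝ) ≤ 1)
          intro u hu
          apply mul_nonneg (by linarith [hu.2])
          split_ifs <;> norm_num
        rw [if_neg hhb, show (1:ℝ)/2 * (if |η| ≤ 1 then (1:ℝ) else 0) * 0 * h ^ 2 = 0 by ring]
        exact hnn
    · have hnn : 0 ≤ h ^ 2 * ∫ t in (0:ℝ)..1,
          (1 - t) * (if |η + t * h| ≤ 2 then (1:ℝ) else 0) := by
        apply mul_nonneg (sq_nonneg _)
        apply intervalIntegral.integral_nonneg (by norm_num : (0:ℝ) ≤ 1)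
        intro u hu
        apply mul_nonneg (by linarith [hu.2])
        split_ifs <;> norm_num
      rw [if_neg hη, show (1:ℝ)/2 * 0 * (if |h| ≤ 1 then (1:ℝ) else 0) * h ^ 2 = 0 by ring]
      exact hnn
end

section
/- Let V ⊆ ℝⁿ be a vector subspace such that for some ρ, R ∈ (0,1), every v ∈ V satisfies Σᵢ 1[vᵢ² ≤ ‖v‖²/(R²n)]·vᵢ² ≥ ρ²‖v‖². Then V is ((ρ²/4)·R²·n, ρ/2)-spread; in fact it is ((ρ²/4)·R²·n, √(3/4)·ρ)-spread. -/
/-- A subspace `V ⊆ ℝⁿ` is `(m, ρ)`-spread if for every `v ∈ V` and every subset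
`S ⊆ [n]` with `|S| ≥ n − m`, one has `‖v_S‖ ≥ ρ‖v‖`. -/
def IsSpread {n : ℕ} (V : Submodule ℝ (Fin n → ℝ)) (m ρ : ℝ) : Prop :=
  ∀ v ∈ V, ∀ S : Finset (Fin n), (n : ℝ) - m ≤ (S.card : ℝ) →
    ρ * Real.sqrt (∑ i, v i ^ 2) ≤ Real.sqrt (∑ i ∈ S, v i ^ 2)

theorem min_eigenvalue_implies_spread {n : ℕ} (V : Submodule ℝ (Fin n → ℝ))
    (ρ R : ℝ) (hρ : ρ ∈ Set.Ioo (0:ℝ) 1) (hR : R ∈ Set.Ioo (0:ℝ) 1)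
    (h : ∀ v ∈ V, ρ ^ 2 * ∑ i, v i ^ 2 ≤
      ∑ i, (if v i ^ 2 ≤ (∑ j, v j ^ 2) / (R ^ 2 * n) then v i ^ 2 else 0)) :
    IsSpread V (ρ ^ 2 / 4 * R ^ 2 * n) (ρ / 2) ∧
    IsSpread V (ρ ^ 2 / 4 * R ^ 2 * n) (Real.sqrt (3 / 4) * ρ) := by
  obtain ⟨hρ0, hρ1⟩ := hρ
  obtain ⟨hR0, hR1⟩ := hR
  have key : IsSpread V (ρ ^ 2 / 4 * R ^ 2 * n) (Real.sqrt (3 / 4) * ρ) := by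
    intro v hv S hS
    rcases Nat.eq_zero_or_pos n with hn | hn
    · subst hn
      simp
    have hn0 : (0:ℝ) < n := by exact_mod_cast hn
    set s := ∑ i, v i ^ 2 with hs
    have hs0 : 0 ≤ s := Finset.sum_nonneg fun i _ => sq_nonneg _
    have hRn : (0:ℝ) < R ^ 2 * n := by positivity
    have hτ : 0 ≤ s / (R ^ 2 * n) := div_nonneg hs0 hRn.le
    have hsum := h v hv
    have hsplit : (∑ i ∈ S, (if v i ^ 2 ≤ s / (R ^ 2 * n) then v i ^ 2 else 0))
        + ∑ i ∈ Sᶜ, (if v i ^ 2 ≤ s / (R ^ 2 * n) then v i ^ 2 else 0)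
        = ∑ i, (if v i ^ 2 ≤ s / (R ^ 2 * n) then v i ^ 2 else 0) :=
      Finset.sum_add_sum_compl S _
    have h1 : (∑ i ∈ S, (if v i ^ 2 ≤ s / (R ^ 2 * n) then v i ^ 2 else 0))
        ≤ ∑ i ∈ S, v i ^ 2 := by
      apply Finset.sum_le_sum
      intro i _
      split
      · exact le_rfl
      · exact sq_nonneg _
    have h2 : (∑ i ∈ Sᶜ, (if v i ^ 2 ≤ s / (R ^ 2 * n) then v i ^ 2 else 0))
        ≤ (Sᶜ.card : ℝ) * (s / (R ^ 2 * n)) := by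
      calc (∑ i ∈ Sᶜ, (if v i ^ 2 ≤ s / (R ^ 2 * n) then v i ^ 2 else 0))
          ≤ ∑ _i ∈ Sᶜ, s / (R ^ 2 * n) := by
            apply Finset.sum_le_sum
            intro i _
            split
            · assumption
            · exact hτ
        _ = (Sᶜ.card : ℝ) * (s / (R ^ 2 * n)) := by
            rw [Finset.sum_const, nsmul_eq_mul]
    have hcard : (Sᶜ.card : ℝ) ≤ ρ ^ 2 / 4 * R ^ 2 * n := by
      have hSn : S.card ≤ n := by
        simpa using S.card_le_univ
      have : (Sᶜ.card : ℝ) = (n : ℝ) - S.card := by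
        rw [Finset.card_compl]
        simp [Nat.cast_sub hSn]
      rw [this]
      linarith
    have h3 : (Sᶜ.card : ℝ) * (s / (R ^ 2 * n)) ≤ ρ ^ 2 / 4 * s := by
      have := mul_le_mul_of_nonneg_right hcard hτ
      calc (Sᶜ.card : ℝ) * (s / (R ^ 2 * n)) ≤ (ρ ^ 2 / 4 * R ^ 2 * n) * (s / (R ^ 2 * n)) := this
        _ = ρ ^ 2 / 4 * s := by field_simp
    have hmain : 3 / 4 * ρ ^ 2 * s ≤ ∑ i ∈ S, v i ^ 2 := by
      nlinarith [hsum, hsplit, h1, h2, h3]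
    calc Real.sqrt (3 / 4) * ρ * Real.sqrt s
        = Real.sqrt (3 / 4 * ρ ^ 2 * s) := by
          rw [show (3/4:ℝ) * ρ ^ 2 * s = 3/4 * (ρ ^ 2 * s) by ring,
            Real.sqrt_mul (by norm_num), Real.sqrt_mul (sq_nonneg ρ),
            Real.sqrt_sq hρ0.le, mul_assoc]
      _ ≤ Real.sqrt (∑ i ∈ S, v i ^ 2) := Real.sqrt_le_sqrt hmain
  refine ⟨?_, key⟩
  intro v hv S hS
  have hk := key v hv S hS
  have hhalf : (1/2 : ℝ) ≤ Real.sqrt (3/4) := by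
    rw [show (1/2:ℝ) = Real.sqrt (1/4) by
      rw [show (1/4:ℝ) = (1/2)^2 by norm_num, Real.sqrt_sq (by norm_num)]]
    exact Real.sqrt_le_sqrt (by norm_num)
  have hs0 : 0 ≤ Real.sqrt (∑ i, v i ^ 2) := Real.sqrt_nonneg _
  have hmul := mul_le_mul_of_nonneg_right hhalf (mul_nonneg hρ0.le hs0)
  nlinarith [hk, hmul]
end

section
/- Let m ∈ [n], A ⊂ [n], γ₁, γ₂ > 0. Let v ∈ ℝⁿ satisfy Σ_{i∈A} vᵢ² ≤ γ₁²‖v‖² and, for every set M ⊂ [n] of size m, Σ_{i∈M} vᵢ² ≤ γ₂²‖v‖². Then Σ_{i∈[n]∖A} |vᵢ| ≥ ((1 − γ₁² − γ₂²)/γ₂)·√m·‖v‖. -/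
lemma exists_top_set {α : Type*} [Fintype α] [DecidableEq α] (f : α → ℝ) :
    ∀ m : ℕ, m ≤ Fintype.card α →
      ∃ M : Finset α, M.card = m ∧ ∀ i ∉ M, ∀ j ∈ M, f i ≤ f j := by
  intro m
  induction m with
  | zero => exact fun _ => ⟨∅, rfl, by simp⟩
  | succ k ih =>
    intro hk
    obtain ⟨M, hcard, hprop⟩ := ih (Nat.le_of_succ_le hk)
    have hne : Mᶜ.Nonempty := by
      rw [← Finset.card_pos, Finset.card_compl, hcard]
      omega
    obtain ⟨j₀, hj₀mem, hj₀max⟩ := Mᶜ.exists_max_image f hne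
    have hj₀ : j₀ ∉ M := Finset.mem_compl.mp hj₀mem
    refine ⟨insert j₀ M, ?_, ?_⟩
    · rw [Finset.card_insert_of_notMem hj₀, hcard]
    · intro i hi j hj
      rcases Finset.mem_insert.mp hj with rfl | hjM
      · exact hj₀max i (Finset.mem_compl.mpr fun h => hi (Finset.mem_insert_of_mem h))
      · exact hprop i (fun h => hi (Finset.mem_insert_of_mem h)) j hjM

theorem l1_vs_l2_lower_bound {n : ℕ} (m : ℕ) (hm : 1 ≤ m) (hmn : m ≤ n)
    (A : Finset (Fin n)) (γ₁ γ₂ : ℝ) (hγ₁ : 0 < γ₁) (hγ₂ : 0 < γ₂)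
    (v : Fin n → ℝ)
    (hA : ∑ i ∈ A, v i ^ 2 ≤ γ₁ ^ 2 * ∑ i, v i ^ 2)
    (hM : ∀ M : Finset (Fin n), M.card = m →
      ∑ i ∈ M, v i ^ 2 ≤ γ₂ ^ 2 * ∑ i, v i ^ 2) :
    (1 - γ₁ ^ 2 - γ₂ ^ 2) / γ₂ * Real.sqrt m * Real.sqrt (∑ i, v i ^ 2)
      ≤ ∑ i ∈ Aᶜ, |v i| := by
  set S := ∑ i, v i ^ 2 with hSdef
  have hS0 : 0 ≤ S := Finset.sum_nonneg fun i _ => sq_nonneg _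
  have hRHS0 : 0 ≤ ∑ i ∈ Aᶜ, |v i| := Finset.sum_nonneg fun i _ => abs_nonneg _
  rcases eq_or_lt_of_le hS0 with hS | hSpos
  · rw [← hS, Real.sqrt_zero, mul_zero]
    exact hRHS0
  have hm' : (m : ℕ) ≤ Fintype.card (Fin n) := by simpa using hmn
  obtain ⟨M, hMcard, htop⟩ := exists_top_set (fun i => |v i|) m hm'
  have hmpos : (0 : ℝ) < m := by exact_mod_cast hm
  have hsm : 0 < Real.sqrt m := Real.sqrt_pos.mpr hmpos
  have hsS : 0 < Real.sqrt S := Real.sqrt_pos.mpr hSpos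
  have hMsum : ∑ i ∈ M, v i ^ 2 ≤ γ₂ ^ 2 * S := hM M hMcard
  -- bound on each coordinate outside M
  have hcoord : ∀ i ∉ M, |v i| ≤ γ₂ * Real.sqrt S / Real.sqrt m := by
    intro i hi
    have h1 : (m : ℝ) * |v i| ^ 2 ≤ ∑ j ∈ M, v j ^ 2 := by
      calc (m : ℝ) * |v i| ^ 2 = ∑ _j ∈ M, |v i| ^ 2 := by
            rw [Finset.sum_const, hMcard, nsmul_eq_mul]
        _ ≤ ∑ j ∈ M, v j ^ 2 := by
            apply Finset.sum_le_sum
            intro j hj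
            rw [← sq_abs (v j)]
            exact pow_le_pow_left₀ (abs_nonneg _) (htop i hi j hj) 2
    have h2 : |v i| ^ 2 ≤ γ₂ ^ 2 * S / m :=
      (le_div_iff₀ hmpos).mpr (by nlinarith)
    have h3 : (γ₂ * Real.sqrt S / Real.sqrt m) ^ 2 = γ₂ ^ 2 * S / m := by
      rw [div_pow, mul_pow, Real.sq_sqrt hS0, Real.sq_sqrt hmpos.le]
    have h4 : 0 ≤ γ₂ * Real.sqrt S / Real.sqrt m := by positivity
    nlinarith [abs_nonneg (v i)]
  have hc0 : 0 ≤ γ₂ * Real.sqrt S / Real.sqrt m := by positivity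
  -- upper bound on the sum over Aᶜ \ M
  have hup : ∑ i ∈ Aᶜ \ M, v i ^ 2
      ≤ (γ₂ * Real.sqrt S / Real.sqrt m) * ∑ i ∈ Aᶜ, |v i| := by
    calc ∑ i ∈ Aᶜ \ M, v i ^ 2
        ≤ ∑ i ∈ Aᶜ \ M, (γ₂ * Real.sqrt S / Real.sqrt m) * |v i| := by
          apply Finset.sum_le_sum
          intro i hi
          have hiM : i ∉ M := (Finset.mem_sdiff.mp hi).2
          have := hcoord i hiM
          nlinarith [abs_nonneg (v i), sq_abs (v i)]
      _ = (γ₂ * Real.sqrt S / Real.sqrt m) * ∑ i ∈ Aᶜ \ M, |v i| := by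
          rw [Finset.mul_sum]
      _ ≤ (γ₂ * Real.sqrt S / Real.sqrt m) * ∑ i ∈ Aᶜ, |v i| := by
          apply mul_le_mul_of_nonneg_left _ hc0
          exact Finset.sum_le_sum_of_subset_of_nonneg (Finset.sdiff_subset)
            (fun i _ _ => abs_nonneg _)
  -- lower bound on the sum over Aᶜ \ M
  have hcomp : ∑ i ∈ Aᶜ, v i ^ 2 = S - ∑ i ∈ A, v i ^ 2 := by
    rw [hSdef, eq_sub_iff_add_eq, Finset.sum_compl_add_sum]
  have hinter : ∑ i ∈ Aᶜ ∩ M, v i ^ 2 ≤ γ₂ ^ 2 * S := by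
    refine le_trans ?_ hMsum
    exact Finset.sum_le_sum_of_subset_of_nonneg (Finset.inter_subset_right)
      (fun i _ _ => sq_nonneg _)
  have hsdiff : ∑ i ∈ Aᶜ \ M, v i ^ 2
      = ∑ i ∈ Aᶜ, v i ^ 2 - ∑ i ∈ Aᶜ ∩ M, v i ^ 2 := by
    rw [← Finset.sum_sdiff_eq_sub (Finset.inter_subset_left)]
    congr 1
    ext i
    simp [Finset.mem_sdiff, Finset.mem_inter]
  have hlow : (1 - γ₁ ^ 2 - γ₂ ^ 2) * S ≤ ∑ i ∈ Aᶜ \ M, v i ^ 2 := by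
    rw [hsdiff, hcomp]
    nlinarith
  -- combine
  have key : (1 - γ₁ ^ 2 - γ₂ ^ 2) * S
      ≤ (γ₂ * Real.sqrt S / Real.sqrt m) * ∑ i ∈ Aᶜ, |v i| :=
    le_trans hlow hup
  have hSsq : Real.sqrt S * Real.sqrt S = S := Real.mul_self_sqrt hS0
  have h5 : (1 - γ₁ ^ 2 - γ₂ ^ 2) * S * Real.sqrt m
      ≤ γ₂ * Real.sqrt S * ∑ i ∈ Aᶜ, |v i| := by
    have := mul_le_mul_of_nonneg_right key hsm.le
    calc (1 - γ₁ ^ 2 - γ₂ ^ 2) * S * Real.sqrt m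
        ≤ (γ₂ * Real.sqrt S / Real.sqrt m) * (∑ i ∈ Aᶜ, |v i|) * Real.sqrt m := this
      _ = γ₂ * Real.sqrt S * ∑ i ∈ Aᶜ, |v i| := by
          field_simp
  refine le_of_mul_le_mul_right ?_ (mul_pos hγ₂ hsS)
  calc (1 - γ₁ ^ 2 - γ₂ ^ 2) / γ₂ * Real.sqrt m * Real.sqrt S * (γ₂ * Real.sqrt S)
      = (1 - γ₁ ^ 2 - γ₂ ^ 2) * S * Real.sqrt m := by
        have hSsq2 : Real.sqrt S ^ 2 = S := Real.sq_sqrt hS0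
        field_simp
        linear_combination (1 - γ₁ ^ 2 - γ₂ ^ 2) * hSsq2
    _ ≤ γ₂ * Real.sqrt S * ∑ i ∈ Aᶜ, |v i| := h5
    _ = (∑ i ∈ Aᶜ, |v i|) * (γ₂ * Real.sqrt S) := by ring
end

section
/- Suppose a vector v ∈ ℝⁿ satisfies: for every subset S ⊆ [n], Σ_{i∈S} |vᵢ| ≤ |S|·ln(en/|S|). Then ‖v‖ ≤ √(6n). -/
open Finset

lemma log_succ_mul_le (m : ℕ) : (m : ℝ) * (Real.log (m + 1) - Real.log m) ≤ 1 := by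
  rcases Nat.eq_zero_or_pos m with hm | hm
  · simp [hm]
  · have hm' : (0:ℝ) < m := by exact_mod_cast hm
    have h1 : Real.log ((m + 1) / m) ≤ (m + 1) / m - 1 :=
      Real.log_le_sub_one_of_pos (by positivity)
    rw [Real.log_div (by positivity) (ne_of_gt hm')] at h1
    have h2 : ((m:ℝ) + 1) / m - 1 = 1 / m := by field_simp; ring
    rw [h2] at h1
    calc (m : ℝ) * (Real.log (m + 1) - Real.log m) ≤ (m:ℝ) * (1 / m) := by
          exact mul_le_mul_of_nonneg_left (by exact_mod_cast h1) hm'.le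
      _ = 1 := by field_simp

lemma sumlogA (m : ℕ) : ∑ k ∈ range m, (Real.log m - Real.log (k + 1)) ≤ m := by
  induction m with
  | zero => simp
  | succ m ih =>
    rw [Finset.sum_range_succ]
    push_cast
    have key : ∑ k ∈ range m, (Real.log (m + 1) - Real.log (k + 1))
        = (∑ k ∈ range m, (Real.log m - Real.log (k + 1)))
          + m * (Real.log (m + 1) - Real.log m) := by
      rw [Finset.sum_congr rfl (fun k _ => by ring :
        ∀ k ∈ range m, Real.log (↑m + 1) - Real.log (↑k + 1)
          = (Real.log m - Real.log (k + 1)) + (Real.log (↑m + 1) - Real.log m)),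
        Finset.sum_add_distrib, Finset.sum_const, card_range, nsmul_eq_mul]
    rw [key]
    have := log_succ_mul_le m
    simp only [sub_self, add_zero]
    push_cast at ih ⊢
    linarith

lemma sumlogB (m : ℕ) : ∑ k ∈ range m, (1 + Real.log m - Real.log (k + 1)) ^ 2 ≤ 6 * (m:ℝ) := by
  induction m with
  | zero => simp
  | succ m ih =>
    rcases Nat.eq_zero_or_pos m with hm | hm
    · subst hm; norm_num [Finset.sum_range_one, Real.log_one]
    have hm' : (0:ℝ) < m := by exact_mod_cast hm
    rw [Finset.sum_range_succ]
    push_cast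
    have key : ∑ k ∈ range m, (1 + Real.log (m + 1) - Real.log (k + 1)) ^ 2
        = (∑ k ∈ range m, (1 + Real.log m - Real.log (k + 1)) ^ 2)
          + (Real.log (m + 1) - Real.log m)
            * ∑ k ∈ range m, (2 + Real.log (m + 1) + Real.log m - 2 * Real.log (k + 1)) := by
      rw [Finset.mul_sum, ← Finset.sum_add_distrib]
      refine Finset.sum_congr rfl fun k _ => by ring
    rw [key]
    -- bound the correction term
    have hd0 : (0:ℝ) ≤ Real.log (m + 1) - Real.log m := by
      have : Real.log m ≤ Real.log (m + 1) := Real.log_le_log hm' (by linarith)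
      linarith
    have hsum1 : ∑ k ∈ range m, (Real.log ((m:ℝ) + 1) - Real.log (k + 1)) ≤ (m:ℝ) + 1 := by
      have h := sumlogA (m + 1)
      push_cast at h
      rw [Finset.sum_range_succ] at h
      simp only [sub_self, add_zero] at h
      convert h using 2 <;> push_cast <;> ring_nf
    have hsum2 : ∑ k ∈ range m, (Real.log (m:ℝ) - Real.log (k + 1)) ≤ (m:ℝ) := by
      have h := sumlogA m; push_cast at h ⊢; exact h
    have hS : ∑ k ∈ range m, (2 + Real.log ((m:ℝ) + 1) + Real.log m - 2 * Real.log (k + 1))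
        ≤ 4 * m + 1 := by
      have : ∑ k ∈ range m, (2 + Real.log ((m:ℝ) + 1) + Real.log m - 2 * Real.log (k + 1))
          = (∑ k ∈ range m, (2:ℝ))
            + (∑ k ∈ range m, (Real.log ((m:ℝ) + 1) - Real.log (k + 1)))
            + (∑ k ∈ range m, (Real.log (m:ℝ) - Real.log (k + 1))) := by
        rw [← Finset.sum_add_distrib, ← Finset.sum_add_distrib]
        exact Finset.sum_congr rfl fun k _ => by ring
      rw [this, Finset.sum_const, card_range, nsmul_eq_mul]
      linarith
    have hdle : Real.log ((m:ℝ) + 1) - Real.log m ≤ 1 / m := by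
      have := log_succ_mul_le m
      rw [div_eq_inv_mul, le_inv_mul_iff₀ hm']
      linarith [this]
    have hcorr : (Real.log ((m:ℝ) + 1) - Real.log m)
        * ∑ k ∈ range m, (2 + Real.log ((m:ℝ) + 1) + Real.log m - 2 * Real.log (k + 1)) ≤ 5 := by
      calc (Real.log ((m:ℝ) + 1) - Real.log m)
            * ∑ k ∈ range m, (2 + Real.log ((m:ℝ) + 1) + Real.log m - 2 * Real.log (k + 1))
          ≤ (Real.log ((m:ℝ) + 1) - Real.log m) * (4 * m + 1) :=
            mul_le_mul_of_nonneg_left hS hd0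
        _ ≤ (1 / m) * (4 * m + 1) := by
            apply mul_le_mul_of_nonneg_right hdle (by positivity)
        _ = 4 + 1 / m := by field_simp
        _ ≤ 5 := by
            have : (1:ℝ) / m ≤ 1 := by
              rw [div_le_one hm']; exact_mod_cast hm
            linarith
    have hlast : (1 + Real.log ((m:ℝ) + 1) - Real.log ((m:ℝ) + 1)) ^ 2 = 1 := by ring_nf
    push_cast at ih
    nlinarith [ih, hcorr]

theorem norm_of_log_spread_vector {n : ℕ} (v : Fin n → ℝ)
    (h : ∀ S : Finset (Fin n), S.Nonempty →
      ∑ i ∈ S, |v i| ≤ (S.card : ℝ) * Real.log (Real.exp 1 * n / S.card)) :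
    Real.sqrt (∑ i, v i ^ 2) ≤ Real.sqrt (6 * n) := by
  rcases Nat.eq_zero_or_pos n with hn | hn
  · subst hn; simp
  have hn' : (0:ℝ) < n := by exact_mod_cast hn
  apply Real.sqrt_le_sqrt
  set σ := Tuple.sort (fun i => |v i|) with hσ
  have hmono : Monotone ((fun i => |v i|) ∘ σ) := Tuple.monotone_sort _
  -- key pointwise bound
  have key : ∀ j : Fin n, |v (σ j)| ≤ 1 + Real.log n - Real.log ((n - j.val : ℕ)) := by
    intro j
    set S : Finset (Fin n) := (Finset.Ici j).map σ.toEmbedding with hS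
    have hcard : S.card = n - j.val := by
      rw [hS, Finset.card_map, Fin.card_Ici]
    have hjn : j.val < n := j.isLt
    have hcpos : 0 < n - j.val := Nat.sub_pos_of_lt hjn
    have hne : S.Nonempty := by
      refine ⟨σ j, ?_⟩
      rw [hS, Finset.mem_map]
      exact ⟨j, Finset.mem_Ici.2 le_rfl, rfl⟩
    have hb := h S hne
    have hsum_eq : ∑ i ∈ S, |v i| = ∑ i ∈ Finset.Ici j, |v (σ i)| := by
      rw [hS, Finset.sum_map]; rfl
    have hlower : ((n - j.val : ℕ) : ℝ) * |v (σ j)| ≤ ∑ i ∈ S, |v i| := by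
      rw [hsum_eq]
      have : ∀ i ∈ Finset.Ici j, |v (σ j)| ≤ |v (σ i)| := fun i hi =>
        hmono (Finset.mem_Ici.1 hi)
      calc ((n - j.val : ℕ) : ℝ) * |v (σ j)|
          = (Finset.Ici j).card * |v (σ j)| := by rw [Fin.card_Ici]
        _ = ∑ _i ∈ Finset.Ici j, |v (σ j)| := by
            rw [Finset.sum_const, nsmul_eq_mul]
        _ ≤ ∑ i ∈ Finset.Ici j, |v (σ i)| := Finset.sum_le_sum this
    have hc' : (0:ℝ) < ((n - j.val : ℕ) : ℝ) := by exact_mod_cast hcpos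
    have hlog : Real.log (Real.exp 1 * n / ((n - j.val : ℕ) : ℝ))
        = 1 + Real.log n - Real.log ((n - j.val : ℕ)) := by
      rw [Real.log_div (by positivity) (ne_of_gt hc'),
        Real.log_mul (Real.exp_ne_zero 1) (ne_of_gt hn'), Real.log_exp]
    rw [hcard] at hb
    rw [hlog] at hb
    have := le_trans hlower hb
    exact le_of_mul_le_mul_left this hc'
  -- rewrite sum of squares via the permutation
  have hperm : ∑ i, v i ^ 2 = ∑ j, |v (σ j)| ^ 2 := by
    rw [← Equiv.sum_comp σ (fun i => v i ^ 2)]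
    exact Finset.sum_congr rfl fun j _ => (sq_abs _).symm
  rw [hperm]
  have step1 : ∑ j, |v (σ j)| ^ 2
      ≤ ∑ j : Fin n, (1 + Real.log n - Real.log ((n - j.val : ℕ))) ^ 2 := by
    apply Finset.sum_le_sum
    intro j _
    exact pow_le_pow_left₀ (abs_nonneg _) (key j) 2
  refine le_trans step1 ?_
  have reindex : ∑ j : Fin n, (1 + Real.log n - Real.log ((n - j.val : ℕ))) ^ 2
      = ∑ k ∈ range n, (1 + Real.log n - Real.log (k + 1)) ^ 2 := by
    rw [Fin.sum_univ_eq_sum_range (fun i => (1 + Real.log n - Real.log ((n - i : ℕ))) ^ 2) n]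
    rw [← Finset.sum_range_reflect]
    apply Finset.sum_congr rfl
    intro k hk
    have hk' : k < n := Finset.mem_range.1 hk
    have : n - (n - 1 - k) = k + 1 := by omega
    rw [this]
    push_cast
    ring
  rw [reindex]
  have h6 := sumlogB n
  push_cast at h6 ⊢
  linarith
end

section
/- Suppose vectors v, w ∈ ℝⁿ satisfy: for some t₁, t₂ ≥ 0 and every subset S ⊆ [n], Σ_{i∈S}|vᵢ| ≤ t₁ + |S|·ln(en/|S|) and Σ_{i∈S}|wᵢ| ≤ t₂ + |S|·ln(en/|S|). Then |⟨v, w⟩| ≤ t₁t₂ + (t₁ + t₂)·ln(en) + 6n. -/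
open Finset

lemma chain_antitone {b : ℕ → ℝ} {n : ℕ} (h : ∀ k, k + 1 < n → b (k+1) ≤ b k) :
    ∀ k m, k ≤ m → m < n → b m ≤ b k := by
  intro k m hkm hm
  induction m with
  | zero => have : k = 0 := Nat.le_zero.mp hkm; simp [this]
  | succ m ih =>
    rcases Nat.lt_or_ge k (m+1) with h' | h'
    · exact le_trans (h m hm) (ih (Nat.lt_succ_iff.mp h') (by omega))
    · have : k = m + 1 := le_antisymm hkm h'
      simp [this]

lemma abel_nonneg (d : ℕ → ℝ) : ∀ (n : ℕ) (b : ℕ → ℝ),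
    (∀ k m, k ≤ m → m < n → b m ≤ b k) → (∀ k, k < n → 0 ≤ b k) →
    (∀ m, m ≤ n → 0 ≤ ∑ k ∈ range m, d k) →
    0 ≤ ∑ k ∈ range n, d k * b k := by
  intro n
  induction n with
  | zero => simp
  | succ n ih =>
    intro b hmono hpos hd
    have h1 : 0 ≤ ∑ k ∈ range n, d k * (b k - b n) := by
      refine ih (fun k => b k - b n) ?_ ?_ (fun m hm => hd m (by omega))
      · intro k m hkm hm
        have := hmono k m hkm (by omega); linarith
      · intro k hk
        have := hmono k n (le_of_lt hk) (Nat.lt_succ_self n); linarith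
    have h2 : 0 ≤ b n * ∑ k ∈ range (n+1), d k :=
      mul_nonneg (hpos n (Nat.lt_succ_self n)) (hd (n+1) le_rfl)
    have e : ∑ k ∈ range (n+1), d k * b k
        = (∑ k ∈ range n, d k * (b k - b n)) + b n * ∑ k ∈ range (n+1), d k := by
      have e1 : ∀ s : Finset ℕ, ∑ k ∈ s, d k * b k
          = (∑ k ∈ s, d k * (b k - b n)) + ∑ k ∈ s, b n * d k := by
        intro s
        rw [← Finset.sum_add_distrib]
        exact Finset.sum_congr rfl (fun k _ => by ring)
      rw [e1, Finset.sum_range_succ (fun k => d k * (b k - b n)), Finset.mul_sum]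
      simp
    linarith

lemma sum_c_sq_bound (n : ℕ) (hn : 1 ≤ n) (L : ℝ) (hL : L = 1 + Real.log n) :
    ∑ k ∈ Finset.Ico 1 n, (L - Real.log ((k:ℝ)+1))^2 ≤ 5*n - L^2 - 2*L - 2 := by
  have hn1 : (1:ℝ) ≤ (n:ℝ) := by exact_mod_cast hn
  set f : ℝ → ℝ := fun x => (L - Real.log x)^2 with hf
  have hanti : AntitoneOn f (Set.Icc (1:ℝ) n) := by
    intro x hx y hy hxy
    have hx1 : (1:ℝ) ≤ x := hx.1
    have hylog : Real.log y ≤ Real.log n := Real.log_le_log (by linarith [hy.1]) hy.2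
    have hxy' : Real.log x ≤ Real.log y := Real.log_le_log (by linarith) hxy
    have h0 : 0 ≤ L - Real.log y := by rw [hL]; linarith
    exact pow_le_pow_left₀ h0 (by linarith) 2
  have hint : IntervalIntegrable f MeasureTheory.volume 1 n := by
    apply AntitoneOn.intervalIntegrable
    rwa [Set.uIcc_of_le hn1]
  set H : ℝ → ℝ := fun x => x * ((L - Real.log x)^2 + 2*(L - Real.log x) + 2) with hH
  have hderiv : ∀ x ∈ Set.uIcc (1:ℝ) (n:ℝ), HasDerivAt H (f x) x := by
    intro x hx
    rw [Set.uIcc_of_le hn1] at hx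
    have hx0 : x ≠ 0 := by have := hx.1; intro h; rw [h] at this; linarith
    have hxpos : 0 < x := lt_of_lt_of_le one_pos hx.1
    have hlog := Real.hasDerivAt_log hx0
    have h1 : HasDerivAt (fun y => L - Real.log y) (-x⁻¹) x := hlog.const_sub L
    have hA : HasDerivAt (fun y => (L - Real.log y)^2) (2 * (L - Real.log x)^1 * (-x⁻¹)) x := by
      simpa using h1.fun_pow 2
    have hB : HasDerivAt (fun y => (L - Real.log y)^2 + 2*(L - Real.log y) + 2)
        (2 * (L - Real.log x)^1 * (-x⁻¹) + 2 * (-x⁻¹)) x := (hA.add (h1.const_mul 2)).add_const 2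
    have := (hasDerivAt_id' x).fun_mul hB
    refine this.congr_deriv ?_
    show _ = (L - Real.log x)^2
    field_simp
    ring
  have hftc : ∫ x in (1:ℝ)..(n:ℝ), f x = H n - H 1 :=
    intervalIntegral.integral_eq_sub_of_hasDerivAt hderiv hint
  have hcomp : H (n:ℝ) - H 1 = 5*n - L^2 - 2*L - 2 := by
    have hlogn : Real.log (n:ℝ) = L - 1 := by rw [hL]; ring
    simp only [hH, hlogn, Real.log_one]
    ring
  have hsum := AntitoneOn.sum_le_integral_Ico hn (by rw [Nat.cast_one]; exact hanti)
  calc ∑ k ∈ Finset.Ico 1 n, (L - Real.log ((k:ℝ)+1))^2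
      = ∑ k ∈ Finset.Ico 1 n, f ((k + 1 : ℕ) : ℝ) := by
        refine Finset.sum_congr rfl (fun k _ => ?_)
        push_cast
        rfl
    _ ≤ ∫ x in (1:ℝ)..(n:ℝ), f x := by exact_mod_cast hsum
    _ = 5*n - L^2 - 2*L - 2 := by rw [hftc, hcomp]

theorem inner_product_of_log_spread_vectors {n : ℕ} (v w : Fin n → ℝ)
    (t₁ t₂ : ℝ) (ht₁ : 0 ≤ t₁) (ht₂ : 0 ≤ t₂)
    (hv : ∀ S : Finset (Fin n), S.Nonempty →
      ∑ i ∈ S, |v i| ≤ t₁ + (S.card : ℝ) * Real.log (Real.exp 1 * n / S.card))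
    (hw : ∀ S : Finset (Fin n), S.Nonempty →
      ∑ i ∈ S, |w i| ≤ t₂ + (S.card : ℝ) * Real.log (Real.exp 1 * n / S.card)) :
    |∑ i, v i * w i| ≤ t₁ * t₂ + (t₁ + t₂) * Real.log (Real.exp 1 * n) + 6 * n := by
  classical
  rcases Nat.eq_zero_or_pos n with hn0 | hn
  · subst hn0
    simp only [Nat.cast_zero, mul_zero, Real.log_zero, add_zero, Finset.univ_eq_empty,
      Finset.sum_empty, abs_zero]
    nlinarith
  -- basic facts
  have hn1 : (1:ℝ) ≤ (n:ℝ) := by exact_mod_cast hn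
  have hn0' : (0:ℝ) < (n:ℝ) := by linarith
  set L := Real.log (Real.exp 1 * n) with hLdef
  have hL : L = 1 + Real.log n := by
    rw [hLdef, Real.log_mul (Real.exp_ne_zero 1) (ne_of_gt hn0'), Real.log_exp]
  have hlogn : 0 ≤ Real.log n := Real.log_nonneg hn1
  have hL1 : 1 ≤ L := by rw [hL]; linarith
  set a : Fin n → ℝ := fun i => |v i| with ha
  set b : Fin n → ℝ := fun i => |w i| with hb
  set c : ℕ → ℝ := fun k => Real.log (Real.exp 1 * (n:ℝ) / k) with hcdef
  have hc : ∀ k : ℕ, 1 ≤ k → c k = L - Real.log k := by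
    intro k hk
    have hk0 : ((k:ℝ)) ≠ 0 := Nat.cast_ne_zero.mpr (by omega)
    show Real.log (Real.exp 1 * (n:ℝ) / k) = L - Real.log k
    rw [Real.log_div (ne_of_gt (mul_pos (Real.exp_pos 1) hn0')) hk0, ← hLdef]
  -- sorting permutations
  set πa : Equiv.Perm (Fin n) := Fin.revPerm.trans (Tuple.sort a) with hπa
  set πb : Equiv.Perm (Fin n) := Fin.revPerm.trans (Tuple.sort b) with hπb
  have haen : ∀ i j : Fin n, i ≤ j → a (πa j) ≤ a (πa i) := by
    intro i j hij
    exact Tuple.monotone_sort a (Fin.rev_le_rev.mpr hij)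
  have hben : ∀ i j : Fin n, i ≤ j → b (πb j) ≤ b (πb i) := by
    intro i j hij
    exact Tuple.monotone_sort b (Fin.rev_le_rev.mpr hij)
  set A : ℕ → ℝ := fun k => if h : k < n then a (πa ⟨k, h⟩) else 0 with hA
  set B : ℕ → ℝ := fun k => if h : k < n then b (πb ⟨k, h⟩) else 0 with hB
  have hAmono : ∀ k m, k ≤ m → m < n → A m ≤ A k := by
    intro k m hkm hm
    have hk : k < n := lt_of_le_of_lt hkm hm
    show (if h : m < n then a (πa ⟨m, h⟩) else 0) ≤ (if h : k < n then a (πa ⟨k, h⟩) else 0)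
    rw [dif_pos hm, dif_pos hk]
    exact haen ⟨k, hk⟩ ⟨m, hm⟩ hkm
  have hBmono : ∀ k m, k ≤ m → m < n → B m ≤ B k := by
    intro k m hkm hm
    have hk : k < n := lt_of_le_of_lt hkm hm
    show (if h : m < n then b (πb ⟨m, h⟩) else 0) ≤ (if h : k < n then b (πb ⟨k, h⟩) else 0)
    rw [dif_pos hm, dif_pos hk]
    exact hben ⟨k, hk⟩ ⟨m, hm⟩ hkm
  have hApos : ∀ k, k < n → 0 ≤ A k := by
    intro k hk
    show 0 ≤ if h : k < n then a (πa ⟨k, h⟩) else 0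
    rw [dif_pos hk]; exact abs_nonneg _
  have hBpos : ∀ k, k < n → 0 ≤ B k := by
    intro k hk
    show 0 ≤ if h : k < n then b (πb ⟨k, h⟩) else 0
    rw [dif_pos hk]; exact abs_nonneg _
  -- prefix sum bounds
  have prefixGen : ∀ (u : Fin n → ℝ) (π : Equiv.Perm (Fin n)) (t : ℝ),
      (∀ S : Finset (Fin n), S.Nonempty →
        ∑ i ∈ S, u i ≤ t + (S.card : ℝ) * Real.log (Real.exp 1 * n / S.card)) →
      ∀ m : ℕ, 0 < m → (hm : m ≤ n) →
      ∑ k ∈ range m, (if h : k < n then u (π ⟨k, h⟩) else 0) ≤ t + m * c m := by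
    intro u π t hu m hm0 hm
    set S : Finset (Fin n) := Finset.image (fun j : Fin m => π (Fin.castLE hm j)) Finset.univ
      with hS
    have hinj : Function.Injective (fun j : Fin m => π (Fin.castLE hm j)) :=
      fun x y hxy => Fin.castLE_injective hm (π.injective hxy)
    have hcard : S.card = m := by
      rw [hS, Finset.card_image_of_injective _ hinj, Finset.card_univ, Fintype.card_fin]
    have hne : S.Nonempty := Finset.card_pos.mp (by rw [hcard]; exact hm0)
    have hsum : ∑ i ∈ S, u i = ∑ k ∈ range m, (if h : k < n then u (π ⟨k, h⟩) else 0) := by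
      rw [hS, Finset.sum_image (fun x _ y _ h => hinj h)]
      rw [← Fin.sum_univ_eq_sum_range (fun k => if h : k < n then u (π ⟨k, h⟩) else 0) m]
      refine Finset.sum_congr rfl (fun j _ => ?_)
      have hj : (j : ℕ) < n := lt_of_lt_of_le j.2 hm
      rw [dif_pos hj]
      rfl
    have h := hu S hne
    rw [hcard] at h
    rw [← hsum]
    exact h
  have prefixA : ∀ m : ℕ, 0 < m → m ≤ n → ∑ k ∈ range m, A k ≤ t₁ + m * c m := by
    intro m hm0 hm
    exact prefixGen a πa t₁ (fun S hS => hv S hS) m hm0 hm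
  have prefixB : ∀ m : ℕ, 0 < m → m ≤ n → ∑ k ∈ range m, B k ≤ t₂ + m * c m := by
    intro m hm0 hm
    exact prefixGen b πb t₂ (fun S hS => hw S hS) m hm0 hm
  -- the majorant sequence
  set ψ : ℕ → ℝ := fun k => L - (((k:ℝ)+1) * Real.log ((k:ℝ)+1) - (k:ℝ) * Real.log (k:ℝ))
    with hψdef
  set φ : ℝ → ℕ → ℝ := fun t k => (if k = 0 then t else 0) + ψ k with hφdef
  have hψ0 : ψ 0 = L := by
    simp only [hψdef]
    norm_num
  have hlogstep : ∀ k : ℕ, 1 ≤ k →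
      (k:ℝ) * Real.log ((k:ℝ)+1) - (k:ℝ) * Real.log (k:ℝ) ≤ 1 := by
    intro k hk
    have hk1 : (1:ℝ) ≤ (k:ℝ) := by exact_mod_cast hk
    have hkpos : (0:ℝ) < (k:ℝ) := by linarith
    have h := Real.log_le_sub_one_of_pos (x := ((k:ℝ)+1)/k) (by positivity)
    rw [Real.log_div (by positivity) (by positivity)] at h
    have he : ((k:ℝ)+1)/k - 1 = 1/k := by field_simp; ring
    rw [he] at h
    have := mul_le_mul_of_nonneg_left h (le_of_lt hkpos)
    calc (k:ℝ) * Real.log ((k:ℝ)+1) - (k:ℝ) * Real.log (k:ℝ)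
        = (k:ℝ) * (Real.log ((k:ℝ)+1) - Real.log (k:ℝ)) := by ring
      _ ≤ (k:ℝ) * (1/k) := this
      _ = 1 := by field_simp
  have hlogstep2 : ∀ k : ℕ,
      1 ≤ ((k:ℝ)+2) * Real.log ((k:ℝ)+2) - ((k:ℝ)+2) * Real.log ((k:ℝ)+1) := by
    intro k
    have hkpos : (0:ℝ) < (k:ℝ)+1 := by positivity
    have h := Real.one_sub_inv_le_log_of_pos (x := ((k:ℝ)+2)/((k:ℝ)+1)) (by positivity)
    rw [Real.log_div (by positivity) (by positivity)] at h
    have he : 1 - (((k:ℝ)+2)/((k:ℝ)+1))⁻¹ = 1/((k:ℝ)+2) := by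
      rw [inv_div]
      field_simp
      ring
    rw [he] at h
    have := mul_le_mul_of_nonneg_left h (by positivity : (0:ℝ) ≤ (k:ℝ)+2)
    calc (1:ℝ) = ((k:ℝ)+2) * (1/((k:ℝ)+2)) := by field_simp
      _ ≤ ((k:ℝ)+2) * (Real.log ((k:ℝ)+2) - Real.log ((k:ℝ)+1)) := this
      _ = ((k:ℝ)+2) * Real.log ((k:ℝ)+2) - ((k:ℝ)+2) * Real.log ((k:ℝ)+1) := by ring
  have hψstep : ∀ k : ℕ, ψ (k+1) ≤ ψ k := by
    intro k
    simp only [hψdef]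
    push_cast
    rcases Nat.eq_zero_or_pos k with hk0 | hk1
    · subst hk0
      have h2 : (0:ℝ) ≤ Real.log 2 := Real.log_nonneg one_le_two
      norm_num
      nlinarith [h2]
    · have h1 := hlogstep k hk1
      have h2 := hlogstep2 k
      have e1 : ((k:ℝ)+1+1) = ((k:ℝ)+2) := by ring
      rw [e1]
      nlinarith [h1, h2]
  have hψub : ∀ k : ℕ, 1 ≤ k → ψ k ≤ L - Real.log ((k:ℝ)+1) := by
    intro k hk
    have hk1 : (1:ℝ) ≤ (k:ℝ) := by exact_mod_cast hk
    have hlog : Real.log (k:ℝ) ≤ Real.log ((k:ℝ)+1) := Real.log_le_log (by linarith) (by linarith)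
    have := mul_le_mul_of_nonneg_left hlog (by linarith : (0:ℝ) ≤ (k:ℝ))
    simp only [hψdef]
    nlinarith [this]
  have hψlb : ∀ k : ℕ, k < n → 0 ≤ ψ k := by
    intro k hkn
    rcases Nat.eq_zero_or_pos k with hk0 | hk1
    · subst hk0; rw [hψ0]; linarith
    · have h1 := hlogstep k hk1
      have hk1' : (1:ℝ) ≤ (k:ℝ) := by exact_mod_cast hk1
      have hkn' : (k:ℝ)+1 ≤ (n:ℝ) := by exact_mod_cast hkn
      have hlog : Real.log ((k:ℝ)+1) ≤ Real.log (n:ℝ) :=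
        Real.log_le_log (by linarith) hkn'
      simp only [hψdef]
      have : ((k:ℝ)+1) * Real.log ((k:ℝ)+1) - (k:ℝ) * Real.log (k:ℝ)
          = Real.log ((k:ℝ)+1) + ((k:ℝ) * Real.log ((k:ℝ)+1) - (k:ℝ) * Real.log (k:ℝ)) := by ring
      rw [this, hL]
      linarith
  have hφ0 : ∀ t, φ t 0 = t + L := by
    intro t
    simp only [hφdef, hψ0]
    norm_num
  have hφeq : ∀ t (k : ℕ), k ≠ 0 → φ t k = ψ k := by
    intro t k hk
    simp only [hφdef, if_neg hk, zero_add]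
  have hφmono : ∀ t, 0 ≤ t → ∀ k m, k ≤ m → m < n → φ t m ≤ φ t k := by
    intro t ht
    apply chain_antitone
    intro k hk
    rcases Nat.eq_zero_or_pos k with hk0 | hk1
    · subst hk0
      rw [hφ0, hφeq t 1 one_ne_zero]
      have := hψstep 0
      rw [hψ0] at this
      linarith
    · rw [hφeq t k (by omega), hφeq t (k+1) (by omega)]
      exact hψstep k
  have hφpos : ∀ t, 0 ≤ t → ∀ k, k < n → 0 ≤ φ t k := by
    intro t ht k hk
    rcases Nat.eq_zero_or_pos k with hk0 | hk1
    · subst hk0; rw [hφ0]; linarith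
    · rw [hφeq t k (by omega)]; exact hψlb k hk
  have hφsum : ∀ t (m : ℕ), 0 < m → m ≤ n → ∑ k ∈ range m, φ t k = t + m * c m := by
    intro t m hm0 hm
    have e1 : ∑ k ∈ range m, (if k = 0 then t else 0 : ℝ) = t := by
      rw [Finset.sum_ite_eq' (range m) 0 (fun _ => t)]
      rw [if_pos (Finset.mem_range.mpr hm0)]
    have e2 : ∑ k ∈ range m, ψ k = (m:ℝ) * c m := by
      have tele := Finset.sum_range_sub (fun j : ℕ => (j:ℝ) * L - (j:ℝ) * Real.log (j:ℝ)) m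
      have e3 : ∑ k ∈ range m, ψ k
          = ∑ k ∈ range m, (((fun j : ℕ => (j:ℝ) * L - (j:ℝ) * Real.log (j:ℝ)) (k+1))
            - ((fun j : ℕ => (j:ℝ) * L - (j:ℝ) * Real.log (j:ℝ)) k)) := by
        refine Finset.sum_congr rfl (fun k _ => ?_)
        simp only [hψdef]
        push_cast
        ring
      rw [e3, tele, hc m hm0]
      push_cast
      ring
    calc ∑ k ∈ range m, φ t k
        = ∑ k ∈ range m, ((if k = 0 then t else 0) + ψ k) := by simp only [hφdef]
      _ = t + (m:ℝ) * c m := by rw [Finset.sum_add_distrib, e1, e2]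
  -- Abel step 1
  have step1 : ∑ k ∈ range n, A k * B k ≤ ∑ k ∈ range n, φ t₁ k * B k := by
    have hd : ∀ m, m ≤ n → 0 ≤ ∑ k ∈ range m, (φ t₁ k - A k) := by
      intro m hm
      rcases Nat.eq_zero_or_pos m with hm0 | hm0
      · subst hm0; simp
      · rw [Finset.sum_sub_distrib, sub_nonneg, hφsum t₁ m hm0 hm]
        exact prefixA m hm0 hm
    have h := abel_nonneg (fun k => φ t₁ k - A k) n B hBmono hBpos hd
    have e : ∑ k ∈ range n, (φ t₁ k - A k) * B k
        = ∑ k ∈ range n, φ t₁ k * B k - ∑ k ∈ range n, A k * B k := by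
      rw [← Finset.sum_sub_distrib]
      exact Finset.sum_congr rfl (fun k _ => by ring)
    rw [e] at h
    linarith
  -- Abel step 2
  have step2 : ∑ k ∈ range n, φ t₁ k * B k ≤ ∑ k ∈ range n, φ t₁ k * φ t₂ k := by
    have hd : ∀ m, m ≤ n → 0 ≤ ∑ k ∈ range m, (φ t₂ k - B k) := by
      intro m hm
      rcases Nat.eq_zero_or_pos m with hm0 | hm0
      · subst hm0; simp
      · rw [Finset.sum_sub_distrib, sub_nonneg, hφsum t₂ m hm0 hm]
        exact prefixB m hm0 hm
    have h := abel_nonneg (fun k => φ t₂ k - B k) n (φ t₁) (hφmono t₁ ht₁) (hφpos t₁ ht₁) hd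
    have e : ∑ k ∈ range n, (φ t₂ k - B k) * φ t₁ k
        = ∑ k ∈ range n, φ t₁ k * φ t₂ k - ∑ k ∈ range n, φ t₁ k * B k := by
      rw [← Finset.sum_sub_distrib]
      exact Finset.sum_congr rfl (fun k _ => by ring)
    rw [e] at h
    linarith
  -- step 3
  have step3 : ∑ k ∈ range n, φ t₁ k * φ t₂ k
      ≤ (t₁ + L) * (t₂ + L) + ∑ k ∈ Finset.Ico 1 n, (L - Real.log ((k:ℝ)+1))^2 := by
    rw [Finset.range_eq_Ico, Finset.sum_eq_sum_Ico_succ_bot hn (fun k => φ t₁ k * φ t₂ k)]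
    have h0 : φ t₁ 0 * φ t₂ 0 = (t₁ + L) * (t₂ + L) := by rw [hφ0, hφ0]
    rw [h0]
    refine add_le_add_right (Finset.sum_le_sum (fun k hk => ?_)) _
    rw [Finset.mem_Ico] at hk
    have hk1 : 1 ≤ k := hk.1
    have hkn : k < n := hk.2
    rw [hφeq t₁ k (by omega), hφeq t₂ k (by omega)]
    have h1 := hψub k hk1
    have h2 := hψlb k hkn
    have h3 : 0 ≤ L - Real.log ((k:ℝ)+1) := le_trans h2 h1
    rw [sq]
    exact mul_le_mul h1 h1 h2 h3
  -- rearrangement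
  have habs : |∑ i, v i * w i| ≤ ∑ i, a i * b i := by
    refine (Finset.abs_sum_le_sum_abs _ _).trans (le_of_eq ?_)
    exact Finset.sum_congr rfl (fun i _ => abs_mul _ _)
  have hrearr : ∑ i, a i * b i ≤ ∑ k ∈ range n, A k * B k := by
    have hmv : Monovary (fun i => a (πa i)) (fun i => b (πb i)) := by
      intro i j hij
      rcases le_or_gt j i with h | h
      · exact haen j i h
      · exact absurd (hben i j (le_of_lt h)) (not_le.mpr hij)
    have key := hmv.sum_mul_comp_perm_le_sum_mul (σ := πa.trans πb.symm)
    have lhs : ∑ i, a (πa i) * b (πb ((πa.trans πb.symm) i)) = ∑ i, a i * b i := by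
      have e1 : ∀ i, b (πb ((πa.trans πb.symm) i)) = b (πa i) := by
        intro i
        show b (πb (πb.symm (πa i))) = b (πa i)
        rw [Equiv.apply_symm_apply]
      calc ∑ i, a (πa i) * b (πb ((πa.trans πb.symm) i))
          = ∑ i, a (πa i) * b (πa i) := Finset.sum_congr rfl (fun i _ => by rw [e1])
        _ = ∑ i, a i * b i := Equiv.sum_comp πa (fun i => a i * b i)
    have rhs : ∑ i, a (πa i) * b (πb i) = ∑ k ∈ range n, A k * B k := by
      rw [← Fin.sum_univ_eq_sum_range (fun k => A k * B k) n]
      refine Finset.sum_congr rfl (fun j _ => ?_)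
      show a (πa j) * b (πb j)
          = (if h : (j:ℕ) < n then a (πa ⟨j, h⟩) else 0)
            * (if h : (j:ℕ) < n then b (πb ⟨j, h⟩) else 0)
      rw [dif_pos j.2, dif_pos j.2]
    rw [lhs, rhs] at key
    exact key
  -- final numeric bound
  have hT := sum_c_sq_bound n hn L hL
  have final : |∑ i, v i * w i| ≤ (t₁ + L) * (t₂ + L) + (5*n - L^2 - 2*L - 2) := by
    calc |∑ i, v i * w i| ≤ ∑ i, a i * b i := habs
      _ ≤ ∑ k ∈ range n, A k * B k := hrearr
      _ ≤ ∑ k ∈ range n, φ t₁ k * B k := step1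
      _ ≤ ∑ k ∈ range n, φ t₁ k * φ t₂ k := step2
      _ ≤ (t₁ + L) * (t₂ + L) + ∑ k ∈ Finset.Ico 1 n, (L - Real.log ((k:ℝ)+1))^2 := step3
      _ ≤ (t₁ + L) * (t₂ + L) + (5*n - L^2 - 2*L - 2) := by linarith
  nlinarith [final, hn1, hL1]
end

section
/- Let S ⊆ [n] have size γn and let z₁, …, zₙ be mutually independent real random variables such that (1) for all i, P(zᵢ ≥ 0) = P(zᵢ ≤ 0), and (2) for some ε ≥ 0 and q > 0, for all i ∈ S, P(zᵢ ∈ [0, ε]) = P(zᵢ ∈ [−ε, 0]) ≥ q. Then with probability at least 1 − 2·exp(−Ω(q²γ²n)), the median ẑ of z₁, …, zₙ satisfies |ẑ| ≤ ε. -/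
open MeasureTheory ProbabilityTheory

section Tails
variable {Ω : Type} [MeasurableSpace Ω] {μ : Measure Ω} [IsProbabilityMeasure μ]
  {z : Ω → ℝ} {ε q : ℝ}

lemma half_facts (hz : Measurable z) (hsym : μ {ω | 0 ≤ z ω} = μ {ω | z ω ≤ 0}) :
    (1:ℝ)/2 ≤ (μ {ω | z ω ≤ 0}).toReal ∧
    (μ {ω | 0 ≤ z ω}).toReal + (μ {ω | z ω < 0}).toReal = 1 := by
  have hm0 : MeasurableSet {ω | 0 ≤ z ω} := measurableSet_le measurable_const hz
  have hcompl : {ω | 0 ≤ z ω}ᶜ = {ω | z ω < 0} := by ext ω; simp [not_le]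
  have hadd : μ {ω | 0 ≤ z ω} + μ {ω | z ω < 0} = 1 := by
    rw [← hcompl, measure_add_measure_compl hm0, measure_univ]
  have hadd' : (μ {ω | 0 ≤ z ω}).toReal + (μ {ω | z ω < 0}).toReal = 1 := by
    rw [← ENNReal.toReal_add (measure_ne_top _ _) (measure_ne_top _ _), hadd, ENNReal.toReal_one]
  have hca : (μ {ω | z ω < 0}).toReal ≤ (μ {ω | z ω ≤ 0}).toReal :=
    ENNReal.toReal_mono (measure_ne_top _ _) (measure_mono fun ω h => le_of_lt (Set.mem_setOf_eq ▸ h))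
  have hab : (μ {ω | 0 ≤ z ω}).toReal = (μ {ω | z ω ≤ 0}).toReal := by rw [hsym]
  exact ⟨by linarith, hadd'⟩

lemma tail_bounds (hz : Measurable z) (hε : 0 ≤ ε)
    (hsym : μ {ω | 0 ≤ z ω} = μ {ω | z ω ≤ 0}) :
    (μ {ω | ε < z ω}).toReal ≤ 1/2 ∧ (μ {ω | z ω < -ε}).toReal ≤ 1/2 := by
  obtain ⟨h1, h2⟩ := half_facts hz hsym
  have hab : (μ {ω | 0 ≤ z ω}).toReal = (μ {ω | z ω ≤ 0}).toReal := by rw [hsym]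
  have hc3 : (μ {ω | z ω ≤ 0}).toReal + (μ {ω | z ω ≤ 0}ᶜ).toReal = 1 := by
    rw [← ENNReal.toReal_add (measure_ne_top _ _) (measure_ne_top _ _),
      measure_add_measure_compl (measurableSet_le hz measurable_const), measure_univ,
      ENNReal.toReal_one]
  constructor
  · have hsub : {ω | ε < z ω} ⊆ {ω | z ω ≤ 0}ᶜ := by
      intro ω h; simp only [Set.mem_compl_iff, Set.mem_setOf_eq, not_le] at *
      linarith
    have := ENNReal.toReal_mono (measure_ne_top μ _) (measure_mono hsub)
    linarith
  · have hsub : {ω | z ω < -ε} ⊆ {ω | z ω < 0} := by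
      intro ω h; simp only [Set.mem_setOf_eq] at *
      linarith
    have := ENNReal.toReal_mono (measure_ne_top μ _) (measure_mono hsub)
    linarith

lemma tail_bounds_S (hz : Measurable z) (hε : 0 ≤ ε) (hq0 : 0 ≤ q)
    (hsym : μ {ω | 0 ≤ z ω} = μ {ω | z ω ≤ 0})
    (heq : μ {ω | z ω ∈ Set.Icc 0 ε} = μ {ω | z ω ∈ Set.Icc (-ε) 0})
    (hge : ENNReal.ofReal q ≤ μ {ω | z ω ∈ Set.Icc 0 ε}) :
    (μ {ω | ε < z ω}).toReal ≤ (1-q)/2 ∧ (μ {ω | z ω < -ε}).toReal ≤ (1-q)/2 := by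
  obtain ⟨h1, h2⟩ := half_facts hz hsym
  have hab : (μ {ω | 0 ≤ z ω}).toReal = (μ {ω | z ω ≤ 0}).toReal := by rw [hsym]
  set a := (μ {ω | z ω ≤ 0}).toReal with ha
  set b := (μ {ω | 0 ≤ z ω}).toReal with hb
  set c := (μ {ω | z ω < 0}).toReal with hc
  set p0 := (μ {ω | z ω = 0}).toReal with hp0
  set d := (μ {ω | z ω ∈ Set.Icc 0 ε}).toReal with hd
  have hd' : (μ {ω | z ω ∈ Set.Icc (-ε) 0}).toReal = d := by rw [hd, heq]
  -- split {z ≤ 0} = {z < 0} ∪ {z = 0}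
  have hsplit1 : a = c + p0 := by
    have hset : {ω | z ω ≤ 0} = {ω | z ω < 0} ∪ {ω | z ω = 0} := by
      ext ω; simp [le_iff_lt_or_eq]
    rw [ha, hset, measure_union (by
        rw [Set.disjoint_left]; intro ω h h'; simp only [Set.mem_setOf_eq] at h h'; linarith)
      (measurableSet_eq_fun hz measurable_const),
      ENNReal.toReal_add (measure_ne_top _ _) (measure_ne_top _ _)]
  -- split {0 ≤ z} = Icc ∪ {ε < z}
  have hsplit2 : b = d + (μ {ω | ε < z ω}).toReal := by
    have hset : {ω | 0 ≤ z ω} = {ω | z ω ∈ Set.Icc 0 ε} ∪ {ω | ε < z ω} := by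
      ext ω
      simp only [Set.mem_setOf_eq, Set.mem_union, Set.mem_Icc]
      constructor
      · intro h
        rcases le_or_gt (z ω) ε with h' | h'
        · exact Or.inl ⟨h, h'⟩
        · exact Or.inr h'
      · rintro (⟨h, _⟩ | h)
        · exact h
        · linarith
    rw [hb, hset, measure_union (by
        rw [Set.disjoint_left]; intro ω h h'
        simp only [Set.mem_setOf_eq, Set.mem_Icc] at h h'; linarith [h.2])
      (measurableSet_lt measurable_const hz),
      ENNReal.toReal_add (measure_ne_top _ _) (measure_ne_top _ _)]
  -- split {z ≤ 0} = Icc(-ε,0) ∪ {z < -ε}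
  have hsplit3 : a = d + (μ {ω | z ω < -ε}).toReal := by
    have hset : {ω | z ω ≤ 0} = {ω | z ω ∈ Set.Icc (-ε) 0} ∪ {ω | z ω < -ε} := by
      ext ω
      simp only [Set.mem_setOf_eq, Set.mem_union, Set.mem_Icc]
      constructor
      · intro h
        rcases le_or_gt (-ε) (z ω) with h' | h'
        · exact Or.inl ⟨h', h⟩
        · exact Or.inr h'
      · rintro (⟨_, h⟩ | h)
        · exact h
        · linarith
    rw [ha, hset, measure_union (by
        rw [Set.disjoint_left]; intro ω h h'
        simp only [Set.mem_setOf_eq, Set.mem_Icc] at h h'; linarith [h.1])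
      (measurableSet_lt hz measurable_const),
      ENNReal.toReal_add (measure_ne_top _ _) (measure_ne_top _ _), hd']
  have hqd : q ≤ d := by
    have := ENNReal.toReal_mono (measure_ne_top μ _) hge
    rwa [ENNReal.toReal_ofReal hq0] at this
  have hp0d : p0 ≤ d := by
    refine ENNReal.toReal_mono (measure_ne_top μ _) (measure_mono fun ω h => ?_)
    simp only [Set.mem_setOf_eq] at h ⊢
    exact ⟨le_of_eq h.symm, h.symm ▸ hε⟩
  exact ⟨by linarith, by linarith⟩

end Tails

open MeasureTheory ProbabilityTheory

lemma exp_le_quad {t : ℝ} (h0 : 0 ≤ t) (h1 : t ≤ 1) : Real.exp t ≤ 1 + t + t ^ 2 := by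
  have := Real.exp_bound' h0 h1 (n := 2) (by norm_num)
  simp [Finset.sum_range_succ] at this
  nlinarith [this]

lemma chernoff_aux {Ω : Type} [MeasurableSpace Ω] (μ : Measure Ω) [IsProbabilityMeasure μ]
    {n : ℕ} (A : Fin n → Set Ω) (hA : ∀ i, MeasurableSet (A i))
    (hind : iIndepFun
      (fun i => (A i).indicator (fun _ => (1 : ℝ))) μ)
    {t : ℝ} (ht0 : 0 ≤ t) (ht1 : t ≤ 1) :
    (μ {ω | (n : ℝ) / 2 ≤ ∑ i, (A i).indicator (fun _ => (1 : ℝ)) ω}).toReal ≤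
      Real.exp (-(t * ((n : ℝ) / 2)) + (t + t ^ 2) * ∑ i, (μ (A i)).toReal) := by
  set X : Fin n → Ω → ℝ := fun i => (A i).indicator (fun _ => (1 : ℝ)) with hX
  have hXmeas : ∀ i, Measurable (X i) := fun i => measurable_const.indicator (hA i)
  have hexp_eq : ∀ i, (fun ω => Real.exp (t * X i ω)) =
      fun ω => (A i).indicator (fun _ => Real.exp t - 1) ω + 1 := by
    intro i
    funext ω
    by_cases h : ω ∈ A i <;>
      simp [hX, Set.indicator_of_mem, Set.indicator_of_notMem, h]
  have hint : ∀ i, Integrable (fun ω => Real.exp (t * X i ω)) μ := by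
    intro i
    rw [hexp_eq i]
    exact ((integrable_const _).indicator (hA i)).add (integrable_const 1)
  have hmgf : ∀ i, mgf (X i) μ t = 1 + (Real.exp t - 1) * (μ (A i)).toReal := by
    intro i
    rw [mgf, hexp_eq i, integral_add ((integrable_const _).indicator (hA i)) (integrable_const 1),
      integral_indicator_const _ (hA i), integral_const]
    simp [smul_eq_mul]; rw [measureReal_def]; ring
  have hsum_int : Integrable (fun ω => Real.exp (t * (∑ i, X i) ω)) μ :=
    hind.integrable_exp_mul_sum hXmeas (fun i _ => hint i)
  have hch := measure_ge_le_exp_mul_mgf (X := ∑ i, X i) (μ := μ) ((n : ℝ) / 2) ht0 hsum_int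
  have hset : {ω | (n : ℝ) / 2 ≤ ∑ i, X i ω} = {ω | (n : ℝ) / 2 ≤ (∑ i, X i) ω} := by
    simp [Finset.sum_apply]
  rw [hset]
  refine hch.trans ?_
  rw [hind.mgf_sum hXmeas]
  have hprod : ∏ i, mgf (X i) μ t ≤ Real.exp ((t + t ^ 2) * ∑ i, (μ (A i)).toReal) := by
    rw [Finset.mul_sum, Real.exp_sum]
    refine Finset.prod_le_prod (fun i _ => mgf_nonneg) (fun i _ => ?_)
    rw [hmgf i]
    have h1 : 1 + (Real.exp t - 1) * (μ (A i)).toReal ≤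
        Real.exp ((Real.exp t - 1) * (μ (A i)).toReal) := by
      have := Real.add_one_le_exp ((Real.exp t - 1) * (μ (A i)).toReal)
      linarith
    refine h1.trans (Real.exp_le_exp.2 ?_)
    have hq := exp_le_quad ht0 ht1
    have hnn : (0 : ℝ) ≤ (μ (A i)).toReal := ENNReal.toReal_nonneg
    nlinarith
  calc Real.exp (-t * ((n : ℝ) / 2)) * ∏ i, mgf (X i) μ t
      ≤ Real.exp (-t * ((n : ℝ) / 2)) * Real.exp ((t + t ^ 2) * ∑ i, (μ (A i)).toReal) := by
        exact mul_le_mul_of_nonneg_left hprod (Real.exp_nonneg _)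
    _ = Real.exp (-(t * ((n : ℝ) / 2)) + (t + t ^ 2) * ∑ i, (μ (A i)).toReal) := by
        rw [← Real.exp_add]; ring_nf

open MeasureTheory ProbabilityTheory

attribute [local instance] Classical.propDecidable

theorem median_concentration :
    ∃ c : ℝ, 0 < c ∧
    ∀ (n : ℕ) (Ω : Type) (_ : MeasurableSpace Ω) (μ : Measure Ω),
      IsProbabilityMeasure μ →
    ∀ (z : Fin n → Ω → ℝ), (∀ i, Measurable (z i)) →
      iIndepFun z μ →
    ∀ (S : Finset (Fin n)) (γ q ε : ℝ),
      (S.card : ℝ) = γ * n → 0 < q → 0 ≤ ε →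
      (∀ i, μ {ω | 0 ≤ z i ω} = μ {ω | z i ω ≤ 0}) →
      (∀ i ∈ S, μ {ω | z i ω ∈ Set.Icc 0 ε} = μ {ω | z i ω ∈ Set.Icc (-ε) 0}
        ∧ ENNReal.ofReal q ≤ μ {ω | z i ω ∈ Set.Icc 0 ε}) →
      ENNReal.ofReal (1 - 2 * Real.exp (-(c * q ^ 2 * γ ^ 2 * n))) ≤
        μ {ω | ∀ med : ℝ,
          (n ≤ 2 * (Finset.univ.filter fun i => z i ω ≤ med).card ∧
           n ≤ 2 * (Finset.univ.filter fun i => med ≤ z i ω).card) → |med| ≤ ε} := by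
  refine ⟨1/8, by norm_num, ?_⟩
  intro n Ω mΩ μ hprob z hzmeas hzindep S γ q ε hcard hq hε hsym hS
  haveI := hprob
  set e : ℝ := Real.exp (-(1/8 * q ^ 2 * γ ^ 2 * n)) with he_def
  rcases le_or_gt (1 - 2 * e) 0 with htriv | hpos
  · rw [ENNReal.ofReal_eq_zero.2 htriv]; exact zero_le
  have hepos : 0 < e := Real.exp_pos _
  have he2 : e < 1/2 := by linarith
  -- basic parameter facts
  have hn : 0 < n := by
    rcases Nat.eq_zero_or_pos n with h | h
    · exfalso; rw [he_def] at he2; simp [h] at he2; norm_num at he2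
    · exact h
  have hγ0 : 0 < γ := by
    rcases lt_or_ge 0 γ with h | h
    · exact h
    -- γ ≤ 0 : then card = γ n ≤ 0 so card = 0, γ * n = 0, so γ = 0, e = 1, contradiction
    · exfalso
      have hn' : (0:ℝ) < n := by exact_mod_cast hn
      have hcard0 : (S.card : ℝ) ≤ 0 := by
        rw [hcard]; exact mul_nonpos_of_nonpos_of_nonneg h hn'.le
      have : (S.card : ℝ) = 0 := le_antisymm hcard0 (by positivity)
      have hγn : γ * n = 0 := by rw [← hcard, this]
      have hγeq : γ = 0 := by
        rcases mul_eq_zero.1 hγn with h' | h'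
        · exact h'
        · exact absurd h' (by positivity)
      rw [he_def, hγeq] at he2
      norm_num at he2
  have hγ1 : γ ≤ 1 := by
    have hcle : (S.card : ℝ) ≤ n := by exact_mod_cast Finset.card_le_card (Finset.subset_univ S) |>.trans_eq (by simp)
    have hn' : (0:ℝ) < n := by exact_mod_cast hn
    nlinarith [hcard]
  have hSne : S.Nonempty := by
    rw [← Finset.card_pos]
    by_contra h
    push_neg at h
    have h0 : S.card = 0 := by omega
    have hγn : γ * n = 0 := by rw [← hcard, h0]; simp
    have hn' : (0:ℝ) < n := by exact_mod_cast hn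
    nlinarith
  have hq1 : q ≤ 1 := by
    obtain ⟨i, hi⟩ := hSne
    have h := (hS i hi).2
    have := h.trans prob_le_one
    rwa [ENNReal.ofReal_le_one] at this
  -- the parameter t
  set t : ℝ := q * γ / 2 with ht_def
  have ht0 : 0 ≤ t := by positivity
  have ht1 : t ≤ 1 := by nlinarith
  -- the two families of bad sets
  set A1 : Fin n → Set Ω := fun i => {ω | ε < z i ω} with hA1_def
  set A2 : Fin n → Set Ω := fun i => {ω | z i ω < -ε} with hA2_def
  have hA1 : ∀ i, MeasurableSet (A1 i) := fun i => measurableSet_lt measurable_const (hzmeas i)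
  have hA2 : ∀ i, MeasurableSet (A2 i) := fun i => measurableSet_lt (hzmeas i) measurable_const
  -- independence of indicators
  have hind1 : iIndepFun
      (fun i => (A1 i).indicator (fun _ => (1:ℝ))) μ := by
    have h := hzindep.comp (fun _ => (Set.Ioi ε).indicator (fun _ => (1:ℝ)))
      (fun _ => measurable_const.indicator measurableSet_Ioi)
    convert h using 2
    rfl
  have hind2 : iIndepFun
      (fun i => (A2 i).indicator (fun _ => (1:ℝ))) μ := by
    have h := hzindep.comp (fun _ => (Set.Iio (-ε)).indicator (fun _ => (1:ℝ)))
      (fun _ => measurable_const.indicator measurableSet_Iio)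
    convert h using 2
    rfl
  -- per-index bounds
  have hb1 : ∀ i, (μ (A1 i)).toReal ≤ if i ∈ S then (1-q)/2 else 1/2 := by
    intro i
    by_cases hi : i ∈ S
    · simp only [hi, if_true]
      exact (tail_bounds_S (hzmeas i) hε hq.le (hsym i) (hS i hi).1 (hS i hi).2).1
    · simp only [hi, if_false]
      exact (tail_bounds (hzmeas i) hε (hsym i)).1
  have hb2 : ∀ i, (μ (A2 i)).toReal ≤ if i ∈ S then (1-q)/2 else 1/2 := by
    intro i
    by_cases hi : i ∈ S
    · simp only [hi, if_true]
      exact (tail_bounds_S (hzmeas i) hε hq.le (hsym i) (hS i hi).1 (hS i hi).2).2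
    · simp only [hi, if_false]
      exact (tail_bounds (hzmeas i) hε (hsym i)).2
  -- sum of the bounds
  have hsumb : ∑ i : Fin n, (if i ∈ S then ((1-q)/2 : ℝ) else 1/2) = (n:ℝ)/2 - t * n := by
    have h1 : ∀ i : Fin n, (if i ∈ S then ((1-q)/2 : ℝ) else 1/2)
        = 1/2 - (if i ∈ S then q/2 else 0) := by
      intro i; by_cases hi : i ∈ S <;> (simp [hi]; try ring)
    simp_rw [h1]
    rw [Finset.sum_sub_distrib, Finset.sum_const, Finset.sum_ite_mem, Finset.univ_inter,
      Finset.sum_const]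
    simp only [Finset.card_univ, Fintype.card_fin, nsmul_eq_mul, smul_eq_mul]
    rw [ht_def]
    have : (S.card : ℝ) = γ * n := hcard
    rw [this]; ring
  -- Chernoff applications
  have hexp_le : Real.exp (-(t * ((n : ℝ) / 2)) + (t + t ^ 2) * ((n:ℝ)/2 - t * n)) ≤ e := by
    rw [he_def, Real.exp_le_exp, ht_def]
    have hn' : (0:ℝ) ≤ n := by positivity
    nlinarith [sq_nonneg (q*γ), mul_nonneg (mul_nonneg hq.le hγ0.le) hn']
  have key : ∀ (A : Fin n → Set Ω), (∀ i, MeasurableSet (A i)) →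
      iIndepFun (fun i => (A i).indicator (fun _ => (1:ℝ))) μ →
      (∀ i, (μ (A i)).toReal ≤ if i ∈ S then (1-q)/2 else 1/2) →
      μ {ω | (n : ℝ) / 2 ≤ ∑ i, (A i).indicator (fun _ => (1 : ℝ)) ω} ≤ ENNReal.ofReal e := by
    intro A hA hind hb
    have hch := chernoff_aux μ A hA hind ht0 ht1
    have hsum_le : ∑ i, (μ (A i)).toReal ≤ (n:ℝ)/2 - t * n := by
      rw [← hsumb]; exact Finset.sum_le_sum fun i _ => hb i
    have hfinal : (μ {ω | (n : ℝ) / 2 ≤ ∑ i, (A i).indicator (fun _ => (1 : ℝ)) ω}).toReal ≤ e := by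
      refine hch.trans (le_trans (Real.exp_le_exp.2 ?_) hexp_le)
      have htt : (0:ℝ) ≤ t + t ^ 2 := by positivity
      nlinarith [mul_le_mul_of_nonneg_left hsum_le htt]
    calc μ {ω | (n : ℝ) / 2 ≤ ∑ i, (A i).indicator (fun _ => (1 : ℝ)) ω}
        = ENNReal.ofReal (μ {ω | (n : ℝ) / 2 ≤ ∑ i, (A i).indicator (fun _ => (1 : ℝ)) ω}).toReal :=
          (ENNReal.ofReal_toReal (measure_ne_top _ _)).symm
      _ ≤ ENNReal.ofReal e := ENNReal.ofReal_le_ofReal hfinal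
  have hkey1 := key A1 hA1 hind1 hb1
  have hkey2 := key A2 hA2 hind2 hb2
  -- the bad sets
  set B1 : Set Ω := {ω | (n : ℝ) / 2 ≤ ∑ i, (A1 i).indicator (fun _ => (1 : ℝ)) ω} with hB1_def
  set B2 : Set Ω := {ω | (n : ℝ) / 2 ≤ ∑ i, (A2 i).indicator (fun _ => (1 : ℝ)) ω} with hB2_def
  have hB1m : MeasurableSet B1 :=
    measurableSet_le measurable_const (Finset.measurable_sum Finset.univ
      (fun i _ => measurable_const.indicator (hA1 i)))
  have hB2m : MeasurableSet B2 :=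
    measurableSet_le measurable_const (Finset.measurable_sum Finset.univ
      (fun i _ => measurable_const.indicator (hA2 i)))
  -- inclusion of complements
  have hsub : (B1 ∪ B2)ᶜ ⊆ {ω | ∀ med : ℝ,
      (n ≤ 2 * (Finset.univ.filter fun i => z i ω ≤ med).card ∧
       n ≤ 2 * (Finset.univ.filter fun i => med ≤ z i ω).card) → |med| ≤ ε} := by
    intro ω hω
    simp only [hB1_def, hB2_def, Set.mem_compl_iff, Set.mem_union, Set.mem_setOf_eq,
      not_or, not_le] at hω
    obtain ⟨hω1, hω2⟩ := hω
    have hcard1 : ∑ i, (A1 i).indicator (fun _ => (1 : ℝ)) ω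
        = ((Finset.univ.filter fun i => ε < z i ω).card : ℝ) := by
      rw [← Finset.sum_boole]
      congr 1
    have hcard2 : ∑ i, (A2 i).indicator (fun _ => (1 : ℝ)) ω
        = ((Finset.univ.filter fun i => z i ω < -ε).card : ℝ) := by
      rw [← Finset.sum_boole]
      congr 1
    rw [hcard1] at hω1
    rw [hcard2] at hω2
    intro med ⟨h1, h2⟩
    rw [abs_le]
    constructor
    · by_contra h
      push_neg at h
      have hss : (Finset.univ.filter fun i => z i ω ≤ med) ⊆
          (Finset.univ.filter fun i => z i ω < -ε) := by
        intro i hi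
        simp only [Finset.mem_filter, Finset.mem_univ, true_and] at hi ⊢
        linarith
      have hcc := Finset.card_le_card hss
      have : (n:ℝ) ≤ 2 * ((Finset.univ.filter fun i => z i ω < -ε).card : ℝ) := by
        calc (n:ℝ) ≤ 2 * ((Finset.univ.filter fun i => z i ω ≤ med).card : ℝ) := by
              exact_mod_cast h1
          _ ≤ _ := by exact_mod_cast Nat.mul_le_mul_left 2 hcc
      linarith
    · by_contra h
      push_neg at h
      have hss : (Finset.univ.filter fun i => med ≤ z i ω) ⊆
          (Finset.univ.filter fun i => ε < z i ω) := by
        intro i hi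
        simp only [Finset.mem_filter, Finset.mem_univ, true_and] at hi ⊢
        linarith
      have hcc := Finset.card_le_card hss
      have : (n:ℝ) ≤ 2 * ((Finset.univ.filter fun i => ε < z i ω).card : ℝ) := by
        calc (n:ℝ) ≤ 2 * ((Finset.univ.filter fun i => med ≤ z i ω).card : ℝ) := by
              exact_mod_cast h2
          _ ≤ _ := by exact_mod_cast Nat.mul_le_mul_left 2 hcc
      linarith
  -- final computation
  have hBu : μ (B1 ∪ B2) ≤ ENNReal.ofReal (2 * e) := by
    calc μ (B1 ∪ B2) ≤ μ B1 + μ B2 := measure_union_le _ _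
      _ ≤ ENNReal.ofReal e + ENNReal.ofReal e := add_le_add hkey1 hkey2
      _ = ENNReal.ofReal (2 * e) := by rw [← ENNReal.ofReal_add hepos.le hepos.le]; ring_nf
  calc ENNReal.ofReal (1 - 2 * e)
      ≤ 1 - ENNReal.ofReal (2 * e) := by
        rw [ENNReal.ofReal_sub _ (by positivity)]
        simp
    _ ≤ 1 - μ (B1 ∪ B2) := by
        exact tsub_le_tsub_left hBu 1
    _ = μ ((B1 ∪ B2)ᶜ) := (prob_compl_eq_one_sub (hB1m.union hB2m)).symm
    _ ≤ _ := measure_mono hsub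
end

section
/- Let 0 < m < n be integers. If B ~ Binomial(n, m/n), then P(B = m) ≥ 1/(2√n). -/
open Real Filter Nat Topology

lemma sqrt_pi_le_stirlingSeq {k : ℕ} (hk : k ≠ 0) : Real.sqrt π ≤ Stirling.stirlingSeq k := by
  obtain ⟨j, rfl⟩ := Nat.exists_eq_succ_of_ne_zero hk
  have ht : Tendsto (Stirling.stirlingSeq ∘ Nat.succ) atTop (𝓝 (Real.sqrt π)) :=
    Stirling.tendsto_stirlingSeq_sqrt_pi.comp (tendsto_add_atTop_nat 1)
  exact Stirling.stirlingSeq'_antitone.le_of_tendsto ht j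

lemma stirlingSeq_le {k : ℕ} (hk : k ≠ 0) :
    Stirling.stirlingSeq k ≤ Real.exp 1 / Real.sqrt 2 := by
  obtain ⟨j, rfl⟩ := Nat.exists_eq_succ_of_ne_zero hk
  have := Stirling.stirlingSeq'_antitone (Nat.zero_le j)
  simpa [Stirling.stirlingSeq_one] using this

lemma factorial_eq (k : ℕ) (hk : k ≠ 0) :
    (k ! : ℝ) = Stirling.stirlingSeq k *
      (Real.sqrt (2 * k) * ((k : ℝ) / Real.exp 1) ^ k) := by
  have hk' : (0:ℝ) < k := by exact_mod_cast Nat.pos_of_ne_zero hk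
  rw [Stirling.stirlingSeq]
  field_simp

lemma factorial_lower (k : ℕ) (hk : k ≠ 0) :
    Real.sqrt π * (Real.sqrt (2 * k) * ((k : ℝ) / Real.exp 1) ^ k) ≤ (k ! : ℝ) := by
  rw [factorial_eq k hk]
  have hk' : (0:ℝ) < k := by exact_mod_cast Nat.pos_of_ne_zero hk
  exact mul_le_mul_of_nonneg_right (sqrt_pi_le_stirlingSeq hk) (by positivity)

lemma factorial_upper (k : ℕ) (hk : k ≠ 0) :
    (k ! : ℝ) ≤ Real.exp 1 / Real.sqrt 2 *
      (Real.sqrt (2 * k) * ((k : ℝ) / Real.exp 1) ^ k) := by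
  rw [factorial_eq k hk]
  have hk' : (0:ℝ) < k := by exact_mod_cast Nat.pos_of_ne_zero hk
  exact mul_le_mul_of_nonneg_right (stirlingSeq_le hk) (by positivity)

set_option maxHeartbeats 1000000 in
lemma key (m b : ℕ) (hm : 0 < m) (hb : 0 < b) :
    1 / (2 * Real.sqrt (m + b)) ≤
      ((m + b).choose m : ℝ) * ((m : ℝ) / (m + b)) ^ m * ((b : ℝ) / (m + b)) ^ b := by
  have e0 : (0:ℝ) < Real.exp 1 := Real.exp_pos 1
  have a0 : (0:ℝ) < m := by exact_mod_cast hm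
  have b0 : (0:ℝ) < b := by exact_mod_cast hb
  have N0 : (0:ℝ) < (m:ℝ) + b := by linarith
  -- cast choose
  have hC : ((m + b).choose m : ℝ) = ((m + b)! : ℝ) / ((m ! : ℝ) * (b ! : ℝ)) := by
    rw [Nat.cast_choose ℝ (Nat.le_add_right m b), Nat.add_sub_cancel_left]
  have hl : Real.sqrt π * (Real.sqrt (2 * ((m:ℝ) + b)) * (((m:ℝ) + b) / Real.exp 1) ^ (m + b))
      ≤ ((m + b)! : ℝ) := by
    have := factorial_lower (m + b) (by omega)
    push_cast at this
    exact this
  have hum : (m ! : ℝ) ≤ Real.exp 1 / Real.sqrt 2 *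
      (Real.sqrt (2 * (m:ℝ)) * ((m : ℝ) / Real.exp 1) ^ m) := factorial_upper m hm.ne'
  have hub : (b ! : ℝ) ≤ Real.exp 1 / Real.sqrt 2 *
      (Real.sqrt (2 * (b:ℝ)) * ((b : ℝ) / Real.exp 1) ^ b) := factorial_upper b hb.ne'
  set e := Real.exp 1 with he
  set SN := Real.sqrt (2 * ((m:ℝ) + b)) with hSN
  set Sa := Real.sqrt (2 * (m:ℝ)) with hSa
  set Sb := Real.sqrt (2 * (b:ℝ)) with hSb
  have SN0 : 0 < SN := Real.sqrt_pos.2 (by linarith)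
  have Sa0 : 0 < Sa := Real.sqrt_pos.2 (by linarith)
  have Sb0 : 0 < Sb := Real.sqrt_pos.2 (by linarith)
  -- lower bound for the whole expression
  have pi0 : (0:ℝ) < Real.sqrt π := Real.sqrt_pos.2 Real.pi_pos
  have s20 : (0:ℝ) < Real.sqrt 2 := by positivity
  have hmain : Real.sqrt π * (SN * (((m:ℝ) + b) / e) ^ (m + b)) /
        ((e / Real.sqrt 2 * (Sa * ((m : ℝ) / e) ^ m)) * (e / Real.sqrt 2 * (Sb * ((b : ℝ) / e) ^ b)))
        * (((m : ℝ) / ((m:ℝ) + b)) ^ m * ((b : ℝ) / ((m:ℝ) + b)) ^ b) ≤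
      ((m + b).choose m : ℝ) * ((m : ℝ) / (m + b)) ^ m * ((b : ℝ) / (m + b)) ^ b := by
    rw [hC]
    push_cast
    conv_rhs => rw [mul_assoc]
    have hnn : (0:ℝ) ≤ ((m:ℝ)/((m:ℝ)+b))^m * ((b:ℝ)/((m:ℝ)+b))^b := by positivity
    refine mul_le_mul_of_nonneg_right ?_ hnn
    refine div_le_div₀ (by positivity) hl (by positivity)
      (mul_le_mul hum hub (by positivity) (by positivity))
  refine le_trans ?_ hmain
  -- now a pure identity/inequality about sqrt's
  have hid : Real.sqrt π * (SN * (((m:ℝ) + b) / e) ^ (m + b)) /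
        ((e / Real.sqrt 2 * (Sa * ((m : ℝ) / e) ^ m)) * (e / Real.sqrt 2 * (Sb * ((b : ℝ) / e) ^ b)))
        * (((m : ℝ) / ((m:ℝ) + b)) ^ m * ((b : ℝ) / ((m:ℝ) + b)) ^ b) =
      Real.sqrt π * SN * 2 / (e ^ 2 * (Sa * Sb)) := by
    have h2 : Real.sqrt 2 * Real.sqrt 2 = 2 := Real.mul_self_sqrt (by norm_num)
    have hepow : e ^ (m + b) = e ^ m * e ^ b := pow_add e m b
    have hNpow : ((m:ℝ) + b) ^ (m + b) = ((m:ℝ) + b) ^ m * ((m:ℝ) + b) ^ b := pow_add _ m b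
    field_simp [div_pow]
    ring_nf
    rw [show Real.sqrt 2 ^ 2 = (2:ℝ) from Real.sq_sqrt (by norm_num)]
    ring
    rw [← add_mul, mul_pow, mul_pow]
    have hXm : ((m:ℝ)+b)⁻¹ ^ m * ((m:ℝ)+b) ^ m = 1 := by
      rw [← mul_pow, inv_mul_cancel₀ N0.ne', one_pow]
    have hXb : ((m:ℝ)+b)⁻¹ ^ b * ((m:ℝ)+b) ^ b = 1 := by
      rw [← mul_pow, inv_mul_cancel₀ N0.ne', one_pow]
    linear_combination ((m:ℝ) ^ m * (b:ℝ) ^ b * e⁻¹ ^ m * e⁻¹ ^ b * 2 *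
      (((m:ℝ)+b)⁻¹ ^ b * ((m:ℝ)+b) ^ b)) * hXm + ((m:ℝ) ^ m * (b:ℝ) ^ b * e⁻¹ ^ m * e⁻¹ ^ b * 2) * hXb
  rw [hid]
  -- Sa * Sb = 2 * sqrt(a*b) ≤ 2 * (N/2) = N ; SN = sqrt 2 * sqrt N
  have hab : Sa * Sb ≤ (m:ℝ) + b := by
    rw [hSa, hSb, ← Real.sqrt_mul (by linarith)]
    have h1 : 2 * (m:ℝ) * (2 * (b:ℝ)) ≤ ((m:ℝ) + b) ^ 2 := by nlinarith [sq_nonneg ((m:ℝ) - b)]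
    calc Real.sqrt (2 * (m:ℝ) * (2 * (b:ℝ))) ≤ Real.sqrt (((m:ℝ) + b) ^ 2) :=
          Real.sqrt_le_sqrt h1
      _ = (m:ℝ) + b := Real.sqrt_sq (by linarith)
  have hSNeq : SN = Real.sqrt 2 * Real.sqrt ((m:ℝ) + b) := by
    rw [hSN, Real.sqrt_mul (by norm_num)]
  set sN := Real.sqrt ((m:ℝ) + b) with hsN
  have sN0 : 0 < sN := Real.sqrt_pos.2 N0
  have hsq : sN * sN = (m:ℝ) + b := Real.mul_self_sqrt N0.le
  have step1 : Real.sqrt π * SN * 2 / (e ^ 2 * ((m:ℝ) + b)) ≤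
      Real.sqrt π * SN * 2 / (e ^ 2 * (Sa * Sb)) := by
    apply div_le_div_of_nonneg_left (by positivity) (by positivity)
    exact mul_le_mul_of_nonneg_left hab (by positivity)
  refine le_trans ?_ step1
  rw [hSNeq, ← hsq]
  rw [div_le_div_iff₀ (by positivity) (by positivity)]
  -- reduces to numeric inequality e^2 ≤ 4 * sqrt 2 * sqrt pi (times positives)
  have h2 : (1.4:ℝ) ≤ Real.sqrt 2 := by
    rw [show (1.4:ℝ) = Real.sqrt (1.4^2) from (Real.sqrt_sq (by norm_num)).symm]
    exact Real.sqrt_le_sqrt (by norm_num)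
  have hpi : (1.7:ℝ) ≤ Real.sqrt π := by
    rw [show (1.7:ℝ) = Real.sqrt (1.7^2) from (Real.sqrt_sq (by norm_num)).symm]
    exact Real.sqrt_le_sqrt (by nlinarith [Real.pi_gt_three])
  have hexp : e < 2.7182818286 := Real.exp_one_lt_d9
  have hee : e * e < 2.7182818286 * 2.7182818286 := mul_lt_mul'' hexp hexp e0.le e0.le
  have hsp : (1.4:ℝ) * 1.7 ≤ Real.sqrt 2 * Real.sqrt π :=
    mul_le_mul h2 hpi (by norm_num) (Real.sqrt_nonneg 2)
  have hnum : e ^ 2 ≤ 4 * (Real.sqrt 2 * Real.sqrt π) := by nlinarith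
  nlinarith [mul_le_mul_of_nonneg_right hnum (mul_nonneg sN0.le sN0.le)]

theorem binomial_point_mass_lower_bound (n m : ℕ) (h0 : 0 < m) (hmn : m < n)
    (hp : ENNReal.ofReal ((m : ℝ) / n) ≤ 1) :
    ENNReal.ofReal (1 / (2 * Real.sqrt n)) ≤
      PMF.binomial (Real.toNNReal ((m : ℝ) / n)) (ENNReal.coe_le_one_iff.mp hp) n
        ⟨m, by omega⟩ := by
  have hn0 : (0:ℝ) < n := by exact_mod_cast (by omega : 0 < n)
  have hx0 : (0:ℝ) ≤ (m:ℝ)/n := by positivity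
  have hx1 : (m:ℝ)/n ≤ 1 := by
    rw [div_le_one hn0]; exact_mod_cast hmn.le
  rw [PMF.binomial_apply, ← ENNReal.ofReal_coe_nnreal, Real.coe_toNNReal _ hx0]
  simp only [Fin.val_last, Fin.val_mk]
  have h1p : (1 : ENNReal) - ENNReal.ofReal ((m:ℝ)/n) = ENNReal.ofReal (1 - (m:ℝ)/n) := by
    rw [← ENNReal.ofReal_one, ← ENNReal.ofReal_sub _ hx0]
  have h1x : (0:ℝ) ≤ 1 - (m:ℝ)/n := by linarith
  rw [h1p, ← ENNReal.ofReal_pow hx0, ← ENNReal.ofReal_pow h1x,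
    ← ENNReal.ofReal_natCast (n.choose m),
    ← ENNReal.ofReal_mul (pow_nonneg hx0 m),
    ← ENNReal.ofReal_mul (mul_nonneg (pow_nonneg hx0 m) (pow_nonneg h1x (n - m)))]
  apply ENNReal.ofReal_le_ofReal
  obtain ⟨b, rfl⟩ : ∃ b, n = m + b := ⟨n - m, by omega⟩
  have hb : 0 < b := by omega
  have hkey := key m b h0 hb
  rw [Nat.add_sub_cancel_left]
  push_cast at hkey ⊢
  have hN0 : (0:ℝ) < (m:ℝ) + b := by
    have : (0:ℝ) < m := by exact_mod_cast h0
    have : (0:ℝ) ≤ b := by positivity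
    linarith
  rw [show 1 - (m:ℝ)/((m:ℝ)+b) = (b:ℝ)/((m:ℝ)+b) by field_simp; ring]
  calc 1 / (2 * Real.sqrt ((m:ℝ) + b))
      ≤ ((m + b).choose m : ℝ) * ((m:ℝ)/((m:ℝ)+b))^m * ((b:ℝ)/((m:ℝ)+b))^b := by
        push_cast at hkey; exact hkey
    _ = ((m:ℝ)/((m:ℝ)+b))^m * ((b:ℝ)/((m:ℝ)+b))^b * ((m + b).choose m : ℝ) := by ring
end

section
/- Let z be a real random variable with P(z ≤ 0) = P(z ≥ 0), and let φ_h(t) = sign(t)·min(|t|/h, 1) for h > 0. Then for any τ with |τ| ≥ 2h: τ·E[φ_h(τ − z)] ≥ |τ|·P(0 ≤ sign(τ)·z ≤ |τ|/2). -/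
open MeasureTheory

/-- The derivative of the Huber penalty with parameter `h`. -/
noncomputable def phiHuber (h t : ℝ) : ℝ := Real.sign t * min (|t| / h) 1

lemma phiHuber_abs_le_one (h t : ℝ) (hh : 0 < h) : |phiHuber h t| ≤ 1 := by
  unfold phiHuber
  rw [abs_mul]
  have h1 : |Real.sign t| ≤ 1 := by
    rcases Real.sign_apply_eq t with hs | hs | hs <;> rw [hs] <;> norm_num
  have hmin0 : (0:ℝ) ≤ min (|t| / h) 1 := le_min (by positivity) one_pos.le
  have h2 : |min (|t| / h) 1| ≤ 1 := by
    rw [abs_of_nonneg hmin0]; exact min_le_right _ _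
  calc |Real.sign t| * |min (|t| / h) 1| ≤ 1 * 1 :=
        mul_le_mul h1 h2 (abs_nonneg _) one_pos.le
    _ = 1 := one_mul 1

lemma phiHuber_of_ge (h t : ℝ) (hh : 0 < h) (ht : h ≤ t) : phiHuber h t = 1 := by
  unfold phiHuber
  have htpos : 0 < t := lt_of_lt_of_le hh ht
  rw [Real.sign_of_pos htpos, abs_of_pos htpos, one_mul, min_eq_right]
  exact (one_le_div hh).mpr ht

lemma phiHuber_neg (h t : ℝ) : phiHuber h (-t) = - phiHuber h t := by
  unfold phiHuber
  rw [Real.sign_neg, abs_neg, neg_mul]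

lemma measurable_real_sign : Measurable (Real.sign : ℝ → ℝ) := by
  have : (Real.sign : ℝ → ℝ) = fun r => if r < 0 then -1 else if 0 < r then 1 else 0 :=
    funext fun r => rfl
  rw [this]
  exact Measurable.ite (measurableSet_lt measurable_id measurable_const) measurable_const
    (Measurable.ite (measurableSet_lt measurable_const measurable_id) measurable_const
      measurable_const)

lemma measurable_phiHuber (h : ℝ) : Measurable (fun t : ℝ => phiHuber h t) := by
  unfold phiHuber
  exact measurable_real_sign.mul ((measurable_abs.div_const h).min measurable_const)

lemma huber_helper
    (Ω : Type) [MeasurableSpace Ω] (μ : Measure Ω) [IsProbabilityMeasure μ]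
    (z : Ω → ℝ) (hz : Measurable z)
    (hsym : μ {ω | z ω ≤ 0} = μ {ω | 0 ≤ z ω})
    (h τ : ℝ) (hh : 0 < h) (hτ : 2 * h ≤ τ) :
    (μ {ω | 0 ≤ z ω ∧ z ω ≤ τ / 2}).toReal ≤ ∫ ω, phiHuber h (τ - z ω) ∂μ := by
  have hτ0 : 0 < τ := lt_of_lt_of_le (by linarith) hτ
  set A : Set Ω := {ω | z ω ≤ τ / 2} with hA
  set B : Set Ω := {ω | 0 ≤ z ω ∧ z ω ≤ τ / 2} with hB
  have hAm : MeasurableSet A := measurableSet_le hz measurable_const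
  have hBm : MeasurableSet B := (measurableSet_le measurable_const hz).inter hAm
  set g : Ω → ℝ := fun ω => phiHuber h (τ - z ω) with hg
  have hgmeas : Measurable g := (measurable_phiHuber h).comp (measurable_const.sub hz)
  have hgint : Integrable g μ := by
    apply Integrable.mono' (integrable_const (1:ℝ)) hgmeas.aestronglyMeasurable
    filter_upwards with ω
    simpa using phiHuber_abs_le_one h (τ - z ω) hh
  set f : Ω → ℝ := fun ω =>
    A.indicator (fun _ => (1:ℝ)) ω - Aᶜ.indicator (fun _ => (1:ℝ)) ω with hf
  have hfint : Integrable f μ :=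
    ((integrable_const (1:ℝ)).indicator hAm).sub ((integrable_const (1:ℝ)).indicator hAm.compl)
  have hle : ∀ ω, f ω ≤ g ω := by
    intro ω
    by_cases hω : ω ∈ A
    · have hωc : ω ∉ Aᶜ := by simp [hω]
      have hfω : f ω = 1 := by
        simp [hf, Set.indicator_of_mem hω, Set.indicator_of_notMem hωc]
      have hzω : z ω ≤ τ / 2 := hω
      have hgω : g ω = 1 := phiHuber_of_ge h (τ - z ω) hh (by linarith)
      rw [hfω, hgω]
    · have hωc : ω ∈ Aᶜ := hω
      have hfω : f ω = -1 := by
        simp [hf, Set.indicator_of_notMem hω, Set.indicator_of_mem hωc]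
      have := phiHuber_abs_le_one h (τ - z ω) hh
      have := neg_abs_le (phiHuber h (τ - z ω))
      rw [hfω]
      simp only [hg]
      linarith
  have hint_le : ∫ ω, f ω ∂μ ≤ ∫ ω, g ω ∂μ := integral_mono hfint hgint hle
  have hintf : ∫ ω, f ω ∂μ = (μ A).toReal - (μ Aᶜ).toReal := by
    rw [hf]
    rw [integral_sub ((integrable_const (1:ℝ)).indicator hAm)
      ((integrable_const (1:ℝ)).indicator hAm.compl)]
    rw [integral_indicator_const (1:ℝ) hAm, integral_indicator_const (1:ℝ) hAm.compl]
    simp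
    rfl
  -- measure arithmetic
  have hdisj : Disjoint B Aᶜ := by
    apply Set.disjoint_left.mpr
    intro ω hωB hωC
    exact hωC hωB.2
  have hunion : B ∪ Aᶜ = {ω | 0 ≤ z ω} := by
    ext ω
    simp only [hB, hA, Set.mem_union, Set.mem_setOf_eq, Set.mem_compl_iff, not_le]
    constructor
    · rintro (⟨h1, _⟩ | h1)
      · exact h1
      · linarith
    · intro h1
      by_cases h2 : z ω ≤ τ / 2
      · exact Or.inl ⟨h1, h2⟩
      · exact Or.inr (lt_of_not_ge h2)
  have hadd : μ B + μ Aᶜ = μ {ω | 0 ≤ z ω} := by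
    rw [← measure_union hdisj hAm.compl, hunion]
  have hfin : ∀ s : Set Ω, μ s ≠ ⊤ := fun s => measure_ne_top μ s
  have h1 : (μ B).toReal + (μ Aᶜ).toReal = (μ {ω | 0 ≤ z ω}).toReal := by
    rw [← ENNReal.toReal_add (hfin B) (hfin Aᶜ), hadd]
  have h2 : (μ {ω | 0 ≤ z ω}).toReal ≤ (μ A).toReal := by
    apply ENNReal.toReal_mono (hfin A)
    rw [← hsym]
    refine measure_mono (fun ω hω => ?_)
    simp only [Set.mem_setOf_eq] at hω
    show z ω ≤ τ / 2
    linarith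
  linarith
theorem huber_derivative_expectation_bound
    (Ω : Type) [MeasurableSpace Ω] (μ : Measure Ω) [IsProbabilityMeasure μ]
    (z : Ω → ℝ) (hz : Measurable z)
    (hsym : μ {ω | z ω ≤ 0} = μ {ω | 0 ≤ z ω})
    (h τ : ℝ) (hh : 0 < h) (hτ : 2 * h ≤ |τ|) :
    |τ| * (μ {ω | 0 ≤ Real.sign τ * z ω ∧ Real.sign τ * z ω ≤ |τ| / 2}).toReal
      ≤ τ * ∫ ω, phiHuber h (τ - z ω) ∂μ := by
  have hτne : τ ≠ 0 := by
    intro h0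
    rw [h0, abs_zero] at hτ
    linarith
  rcases lt_or_gt_of_ne hτne with hneg | hpos
  · -- τ < 0 case
    have habs : |τ| = -τ := abs_of_neg hneg
    have hsign : Real.sign τ = -1 := Real.sign_of_neg hneg
    have hsym' : μ {ω | -z ω ≤ 0} = μ {ω | 0 ≤ -z ω} := by
      have e1 : {ω | -z ω ≤ 0} = {ω | 0 ≤ z ω} := by ext ω; simp
      have e2 : {ω | 0 ≤ -z ω} = {ω | z ω ≤ 0} := by ext ω; simp
      rw [e1, e2, hsym]
    have key := huber_helper Ω μ (fun ω => -z ω) hz.neg hsym' h (-τ) hh (by linarith [habs ▸ hτ])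
    have hodd : ∀ ω, phiHuber h (-τ - -z ω) = - phiHuber h (τ - z ω) := by
      intro ω
      rw [show -τ - -z ω = -(τ - z ω) by ring, phiHuber_neg]
    simp only [hodd] at key
    rw [integral_neg] at key
    have hset : {ω | 0 ≤ Real.sign τ * z ω ∧ Real.sign τ * z ω ≤ |τ| / 2}
        = {ω | 0 ≤ -z ω ∧ -z ω ≤ -τ / 2} := by
      ext ω; simp [hsign, habs, neg_mul, one_mul]
    rw [hset, habs]
    nlinarith [key, neg_pos.mpr hneg]
  · -- τ > 0 case
    have habs : |τ| = τ := abs_of_pos hpos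
    have hsign : Real.sign τ = 1 := Real.sign_of_pos hpos
    have key := huber_helper Ω μ z hz hsym h τ hh (by linarith [habs ▸ hτ])
    have hset : {ω | 0 ≤ Real.sign τ * z ω ∧ Real.sign τ * z ω ≤ |τ| / 2}
        = {ω | 0 ≤ z ω ∧ z ω ≤ τ / 2} := by
      ext ω; simp [hsign, habs, one_mul]
    rw [hset, habs]
    nlinarith [key]
end

section
/- Let c : [n] → [n] be a uniformly random function (each c(i) independent uniform on [n]). Then with probability at least 1 − 1/n, for every subset M ⊆ [n], |c^{−1}(M)| ≤ 4·|M|·ln(en/|M|). -/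
open MeasureTheory ProbabilityTheory

attribute [local instance] Classical.propDecidable




lemma aux_pow_le_factorial_exp (k : ℕ) : (k:ℝ)^k ≤ k.factorial * Real.exp k := by
  have h : ((k:ℝ))^k / k.factorial ≤ Real.exp k := by
    calc ((k:ℝ))^k / k.factorial ≤ ∑ i ∈ Finset.range (k+1), (k:ℝ)^i / i.factorial := by
          refine Finset.single_le_sum (f := fun i => (k:ℝ)^i / i.factorial) ?_ (Finset.self_mem_range_succ k)
          intro i _
          positivity
      _ ≤ Real.exp k := Real.sum_le_exp_of_nonneg (by positivity) _
  have hf : (0:ℝ) < k.factorial := by exact_mod_cast k.factorial_pos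
  calc ((k:ℝ))^k = ((k:ℝ)^k / k.factorial) * k.factorial := by field_simp
    _ ≤ Real.exp k * k.factorial := by
        exact mul_le_mul_of_nonneg_right h hf.le
    _ = k.factorial * Real.exp k := mul_comm _ _

lemma aux_choose_le (n k : ℕ) (hk : 1 ≤ k) :
    (n.choose k : ℝ) ≤ (Real.exp 1 * n / k) ^ k := by
  have hkpos : (0:ℝ) < k := by exact_mod_cast hk
  have h1 : (n.choose k : ℝ) ≤ (n:ℝ)^k / k.factorial := Nat.choose_le_pow_div k n
  have hf : (0:ℝ) < k.factorial := by exact_mod_cast k.factorial_pos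
  have h2 : (n:ℝ)^k / k.factorial ≤ (Real.exp 1 * n / k) ^ k := by
    rw [div_pow, mul_pow, div_le_div_iff₀ hf (by positivity)]
    calc (n:ℝ)^k * (k:ℝ)^k ≤ (n:ℝ)^k * (k.factorial * Real.exp k) := by
          exact mul_le_mul_of_nonneg_left (aux_pow_le_factorial_exp k) (by positivity)
      _ = Real.exp (k:ℕ) * (n:ℝ)^k * k.factorial := by ring
      _ = Real.exp 1 ^ k * (n:ℝ)^k * k.factorial := by rw [Real.exp_one_pow]
      _ = Real.exp 1 ^ k * (n:ℝ)^k * k.factorial := rfl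
  exact h1.trans h2


lemma aux_mL (m N : ℝ) (hm : 1 ≤ m) (hmn : m ≤ N) :
    1 + Real.log N ≤ m * (1 + Real.log (N / m)) := by
  have hm0 : 0 < m := by linarith
  have hN0 : 0 < N := by linarith
  have hlogm : Real.log m ≤ m - 1 := Real.log_le_sub_one_of_pos hm0
  have hlogm0 : 0 ≤ Real.log m := Real.log_nonneg hm
  have hlogmn : Real.log m ≤ Real.log N := Real.log_le_log hm0 hmn
  rw [Real.log_div (ne_of_gt hN0) (ne_of_gt hm0)]
  nlinarith [hlogm, hlogm0, hlogmn]

set_option maxHeartbeats 1000000 in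
lemma aux_core {n m k : ℕ} (hm : 1 ≤ m) (h4 : 4 * m < n)
    (hk : 4 * (m:ℝ) * Real.log (Real.exp 1 * n / m) < k) :
    (n.choose m : ℝ) * ((n.choose k : ℝ) * ((m:ℝ)/n)^k) ≤ Real.exp (-3) / (n:ℝ)^3 := by
  set M := (m:ℝ) with hMdef
  set N := (n:ℝ) with hNdef
  set K := (k:ℝ) with hKdef
  have hM1 : (1:ℝ) ≤ M := by rw [hMdef]; exact_mod_cast hm
  have h4MN : 4*M < N := by rw [hMdef, hNdef]; exact_mod_cast h4
  have hM0 : (0:ℝ) < M := by linarith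
  have hN0 : (0:ℝ) < N := by linarith
  have hMN : M ≤ N := by linarith
  have hNM4 : (4:ℝ) < N / M := (lt_div_iff₀ hM0).mpr (by linarith)
  -- L
  set L : ℝ := Real.log (Real.exp 1 * N / M) with hLdef
  have hLeq : L = 1 + Real.log (N / M) := by
    rw [hLdef, mul_div_assoc, Real.log_mul (Real.exp_ne_zero 1) (by positivity),
      Real.log_exp]
  have hlog4 : Real.log 4 = 2 * Real.log 2 := by
    rw [show (4:ℝ) = 2^2 by norm_num, Real.log_pow]; push_cast; ring
  have hlog2 : 0.6931471803 < Real.log 2 := Real.log_two_gt_d9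
  have hL_lb : 1 + Real.log 4 ≤ L := by
    rw [hLeq]
    have := Real.log_le_log (by norm_num) hNM4.le
    linarith
  have hL1 : (1:ℝ) < L := by nlinarith
  have hL0 : (0:ℝ) < L := by linarith
  -- numeric: 2 - log 4 ≤ log L
  have hexp2 : Real.exp 2 < 7.3890560999 := by
    have h := Real.exp_one_lt_d9
    calc Real.exp 2 = Real.exp 1 * Real.exp 1 := by
          rw [← Real.exp_add]; norm_num
      _ < 2.7182818286 * 2.7182818286 := by nlinarith [Real.exp_pos 1]
      _ < 7.3890560999 := by norm_num
  have hlogL : 2 - Real.log 4 ≤ Real.log L := by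
    rw [Real.le_log_iff_exp_le hL0]
    have h1 : Real.exp (2 - Real.log 4) = Real.exp 2 / 4 := by
      rw [Real.exp_sub, Real.exp_log (by norm_num : (0:ℝ) < 4)]
    rw [h1]
    nlinarith
  -- k ≥ 1
  have h4ML0 : 0 < 4 * M * L := by positivity
  have hKpos : (0:ℝ) < K := lt_trans h4ML0 hk
  have hk1 : 1 ≤ k := by
    by_contra h
    push_neg at h
    interval_cases k
    · rw [hKdef] at hKpos; norm_num at hKpos
  -- choose bounds
  have hc1 : (n.choose m : ℝ) ≤ (Real.exp 1 * N / M)^m := aux_choose_le n m hm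
  have hc2 : (n.choose k : ℝ) ≤ (Real.exp 1 * N / K)^k := aux_choose_le n k hk1
  have base1 : (0:ℝ) < Real.exp 1 * N / M := by positivity
  have base2 : (0:ℝ) < Real.exp 1 * M / K := by positivity
  have hstep1 : (n.choose m : ℝ) * ((n.choose k : ℝ) * ((m:ℝ)/n)^k)
      ≤ (Real.exp 1 * N / M)^m * (Real.exp 1 * M / K)^k := by
    have hcomb : (Real.exp 1 * N / K)^k * (M/N)^k = (Real.exp 1 * M / K)^k := by
      rw [← mul_pow]
      congr 1
      field_simp
    calc (n.choose m : ℝ) * ((n.choose k : ℝ) * ((m:ℝ)/n)^k)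
        ≤ (Real.exp 1 * N / M)^m * ((Real.exp 1 * N / K)^k * (M/N)^k) := by
          apply mul_le_mul hc1 _ (by positivity) (by positivity)
          exact mul_le_mul_of_nonneg_right hc2 (by positivity)
      _ = (Real.exp 1 * N / M)^m * (Real.exp 1 * M / K)^k := by rw [hcomb]
  set J : ℝ := Real.log (Real.exp 1 * M / K) with hJdef
  have hexp_eq : (Real.exp 1 * N / M)^m * (Real.exp 1 * M / K)^k
      = Real.exp ((m:ℝ) * L + (k:ℝ) * J) := by
    rw [Real.exp_add, Real.exp_nat_mul, Real.exp_nat_mul, Real.exp_log base1,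
      Real.exp_log base2]
  have hJeq : J = 1 + Real.log M - Real.log K := by
    rw [hJdef, mul_div_assoc, Real.log_mul (Real.exp_ne_zero 1) (by positivity),
      Real.log_exp, Real.log_div (by positivity) (by positivity)]
    ring
  have hlogK : Real.log 4 + Real.log M + Real.log L ≤ Real.log K := by
    have h1 : Real.log (4*M*L) ≤ Real.log K := Real.log_le_log (by positivity) hk.le
    rw [Real.log_mul (by positivity) (by positivity),
      Real.log_mul (by norm_num) (by positivity)] at h1
    linarith
  have hJle : J ≤ 1 - Real.log 4 - Real.log L := by rw [hJeq]; linarith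
  have hJ0 : J ≤ 0 := by linarith
  have hexpo : (m:ℝ) * L + (k:ℝ) * J ≤ -3 - 3 * Real.log N := by
    have h1 : (k:ℝ) * J ≤ 4*M*L*J := mul_le_mul_of_nonpos_right hk.le hJ0
    have h2 : 4*M*L*J ≤ 4*M*L*(1 - Real.log 4 - Real.log L) :=
      mul_le_mul_of_nonneg_left hJle h4ML0.le
    have h3 : M * L + 4*M*L*(1 - Real.log 4 - Real.log L) ≤ -3 * (M*L) := by
      nlinarith [mul_pos hM0 hL0]
    have h4 : 1 + Real.log N ≤ M * L := by
      rw [hLeq]; exact aux_mL M N hM1 hMN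
    have : (m:ℝ) * L = M * L := by rw [hMdef]
    nlinarith
  have hfinal : Real.exp ((m:ℝ) * L + (k:ℝ) * J) ≤ Real.exp (-3) / N^3 := by
    have h1 : Real.exp ((m:ℝ) * L + (k:ℝ) * J) ≤ Real.exp (-3 - 3 * Real.log N) :=
      Real.exp_le_exp.mpr hexpo
    have h2 : Real.exp (-3 - 3 * Real.log N) = Real.exp (-3) / N^3 := by
      rw [Real.exp_sub]
      congr 1
      rw [show (3:ℝ) * Real.log N = ((3:ℕ):ℝ) * Real.log N by norm_num,
        Real.exp_nat_mul, Real.exp_log hN0]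
    linarith
  calc (n.choose m : ℝ) * ((n.choose k : ℝ) * ((m:ℝ)/n)^k)
      ≤ (Real.exp 1 * N / M)^m * (Real.exp 1 * M / K)^k := hstep1
    _ = Real.exp ((m:ℝ) * L + (k:ℝ) * J) := hexp_eq
    _ ≤ Real.exp (-3) / N^3 := hfinal



lemma meas_mem_finset {n : ℕ} {Ω : Type} [MeasurableSpace Ω] (μ : Measure Ω)
    (f : Ω → Fin n) (hf : Measurable f) (h : ∀ j, μ {ω | f ω = j} = ((n : ENNReal))⁻¹)
    (M : Finset (Fin n)) : μ (f ⁻¹' ↑M) = M.card * ((n : ENNReal))⁻¹ := by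
  classical
  have heq : (f ⁻¹' ↑M) = ⋃ j ∈ M, {ω | f ω = j} := by
    ext ω; simp
  rw [heq, measure_biUnion_finset]
  · simp [h, Finset.sum_const, nsmul_eq_mul]
  · intro i _ j _ hij
    simp only [Function.onFun]
    apply Set.disjoint_left.mpr
    intro ω hi hj
    exact hij (hi.symm.trans hj)
  · intro j _
    exact hf (measurableSet_singleton j)

lemma indep_prod {n : ℕ} {Ω : Type} [MeasurableSpace Ω] {μ : Measure Ω}
    {c : Fin n → Ω → Fin n}
    (hindep : iIndepFun c μ)
    (M : Finset (Fin n)) (S : Finset (Fin n)) :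
    μ (⋂ i ∈ S, c i ⁻¹' (M : Set (Fin n))) = ∏ i ∈ S, μ (c i ⁻¹' (M : Set (Fin n))) := by
  exact hindep.measure_inter_preimage_eq_mul S
    (fun i _ => (M.finite_toSet).measurableSet)

theorem random_function_preimage_bound {n : ℕ} (hn : 1 ≤ n)
    (Ω : Type) [MeasurableSpace Ω] (μ : Measure Ω) [IsProbabilityMeasure μ]
    (c : Fin n → Ω → Fin n) (hmeas : ∀ i, Measurable (c i))
    (hindep : iIndepFun c μ)
    (hunif : ∀ i j, μ {ω | c i ω = j} = ((n : ENNReal))⁻¹) :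
    ENNReal.ofReal (1 - 1 / n) ≤
      μ {ω | ∀ M : Finset (Fin n), M.Nonempty →
        ((Finset.univ.filter fun i => c i ω ∈ M).card : ℝ)
          ≤ 4 * M.card * Real.log (Real.exp 1 * n / M.card)} := by
  have hn0 : (0:ℝ) < n := by exact_mod_cast hn
  have he1 : (1:ℝ) ≤ Real.exp 1 := by
    have := Real.exp_one_gt_d9; linarith
  set Lr : ℕ → ℝ := fun m => Real.log (Real.exp 1 * n / m) with hLr
  set kk : ℕ → ℕ := fun m => ⌊4 * (m:ℝ) * Lr m⌋₊ + 1 with hkk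
  -- Lr m ≥ 1 for 1 ≤ m ≤ n
  have hLr1 : ∀ m : ℕ, 1 ≤ m → m ≤ n → 1 ≤ Lr m := by
    intro m hm1 hmn
    have hm0 : (0:ℝ) < m := by exact_mod_cast hm1
    have hmn' : (m:ℝ) ≤ n := by exact_mod_cast hmn
    have : Real.exp 1 ≤ Real.exp 1 * n / m := by
      rw [mul_div_assoc, le_mul_iff_one_le_right (Real.exp_pos 1)]
      rw [le_div_iff₀ hm0]; linarith
    rw [hLr]
    exact (Real.le_log_iff_exp_le (by positivity)).mpr this
  set bad : Finset (Fin n) → Set Ω := fun M =>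
    ⋃ S ∈ Finset.powersetCard (kk M.card) (Finset.univ : Finset (Fin n)),
      ⋂ i ∈ S, c i ⁻¹' (M : Set (Fin n)) with hbad
  set A := {ω | ∀ M : Finset (Fin n), M.Nonempty →
        ((Finset.univ.filter fun i => c i ω ∈ M).card : ℝ)
          ≤ 4 * M.card * Real.log (Real.exp 1 * n / M.card)} with hA
  -- Step 1 : inclusion
  have hsub : Aᶜ ⊆ ⋃ M ∈ (Finset.univ : Finset (Finset (Fin n))), bad M := by
    intro ω hω
    rw [hA] at hω
    simp only [Set.mem_compl_iff, Set.mem_setOf_eq, not_forall] at hω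
    obtain ⟨M, hMne, hlt⟩ := hω
    push_neg at hlt
    have hm1 : 1 ≤ M.card := Finset.card_pos.mpr hMne
    have hmn : M.card ≤ n := by
      simpa using Finset.card_le_univ M
    have hL0 : (0:ℝ) ≤ 4 * M.card * Lr M.card := by
      have := hLr1 M.card hm1 hmn
      positivity
    have hkc : kk M.card ≤ (Finset.univ.filter fun i => c i ω ∈ M).card := by
      rw [hkk]
      exact Nat.succ_le_of_lt ((Nat.floor_lt hL0).mpr hlt)
    obtain ⟨S, hS, hScard⟩ := Finset.exists_subset_card_eq hkc
    simp only [Set.mem_iUnion, hbad]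
    refine ⟨M, Finset.mem_univ M, S, Finset.mem_powersetCard_univ.mpr hScard, ?_⟩
    simp only [Set.mem_iInter]
    intro i hi
    exact (Finset.mem_filter.mp (hS hi)).2
  -- Step 2 : measure of bad M
  have hbadle : ∀ M : Finset (Fin n),
      μ (bad M) ≤ ENNReal.ofReal
        ((n.choose (kk M.card) : ℝ) * ((M.card : ℝ)/n) ^ (kk M.card)) := by
    intro M
    set k := kk M.card with hkdef
    have hterm : ∀ S ∈ Finset.powersetCard k (Finset.univ : Finset (Fin n)),
        μ (⋂ i ∈ S, c i ⁻¹' (M : Set (Fin n)))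
          = ((M.card : ENNReal) * ((n : ENNReal))⁻¹) ^ k := by
      intro S hS
      rw [indep_prod hindep M S]
      have : ∀ i ∈ S, μ (c i ⁻¹' (M : Set (Fin n))) = (M.card : ENNReal) * ((n : ENNReal))⁻¹ :=
        fun i _ => meas_mem_finset μ (c i) (hmeas i) (hunif i) M
      rw [Finset.prod_congr rfl this, Finset.prod_const,
        (Finset.mem_powersetCard.mp hS).2]
    have hmeasle : μ (bad M) ≤
        (n.choose k : ENNReal) * ((M.card : ENNReal) * ((n : ENNReal))⁻¹) ^ k := by
      calc μ (bad M) ≤ ∑ S ∈ Finset.powersetCard k (Finset.univ : Finset (Fin n)),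
            μ (⋂ i ∈ S, c i ⁻¹' (M : Set (Fin n))) := measure_biUnion_finset_le _ _
        _ = ∑ S ∈ Finset.powersetCard k (Finset.univ : Finset (Fin n)),
            ((M.card : ENNReal) * ((n : ENNReal))⁻¹) ^ k := Finset.sum_congr rfl hterm
        _ = (n.choose k : ENNReal) * ((M.card : ENNReal) * ((n : ENNReal))⁻¹) ^ k := by
            rw [Finset.sum_const, Finset.card_powersetCard, nsmul_eq_mul]
            simp
    refine hmeasle.trans_eq ?_
    have h1 : (M.card : ENNReal) * ((n : ENNReal))⁻¹ = ENNReal.ofReal ((M.card : ℝ)/n) := by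
      rw [ENNReal.ofReal_div_of_pos hn0, ENNReal.ofReal_natCast, ENNReal.ofReal_natCast,
        div_eq_mul_inv]
    rw [h1, ← ENNReal.ofReal_pow (by positivity), ← ENNReal.ofReal_natCast (n.choose k),
      ← ENNReal.ofReal_mul (by positivity)]
  -- Step 3 : real sum bound
  have hrealsum : ∑ M ∈ (Finset.univ : Finset (Finset (Fin n))),
      (n.choose (kk M.card) : ℝ) * ((M.card : ℝ)/n) ^ (kk M.card) ≤ 1 / n := by
    set g : ℕ → ℝ := fun m => (n.choose (kk m) : ℝ) * ((m : ℝ)/n) ^ (kk m) with hg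
    have hstep : ∑ M ∈ (Finset.univ : Finset (Finset (Fin n))), g M.card
        = ∑ j ∈ Finset.range (n+1), (n.choose j) • g j := by
      rw [← Finset.powerset_univ, Finset.sum_powerset_apply_card]
      simp
    have hterm : ∀ j ∈ Finset.range (n+1), (n.choose j) • g j ≤ Real.exp (-3) / (n:ℝ)^3 := by
      intro j hj
      have hjn : j ≤ n := Nat.lt_succ_iff.mp (Finset.mem_range.mp hj)
      have hbound0 : (0:ℝ) ≤ Real.exp (-3) / (n:ℝ)^3 := by positivity
      rw [nsmul_eq_mul]
      rcases Nat.eq_zero_or_pos j with hj0 | hj1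
      · subst hj0
        simp only [hg, CharP.cast_eq_zero, zero_div, Nat.choose_zero_right, Nat.cast_one]
        rw [zero_pow (by rw [hkk]; exact Nat.succ_ne_zero _)]
        simpa using hbound0
      · rcases lt_or_ge (4*j) n with h4 | h4
        · -- main case
          have hk : 4 * (j:ℝ) * Lr j < (kk j : ℝ) := by
            rw [hkk]
            push_cast
            exact Nat.lt_floor_add_one _
          exact aux_core hj1 h4 hk
        · -- vanishing case : kk j > n
          have hLj : 1 ≤ Lr j := hLr1 j hj1 hjn
          have hnk : n < kk j := by
            rw [hkk]
            have : (n:ℝ) ≤ 4 * (j:ℝ) * Lr j := by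
              have h4' : (n:ℝ) ≤ 4*(j:ℝ) := by exact_mod_cast h4
              nlinarith
            exact Nat.lt_succ_of_le (Nat.le_floor this)
          have hzero : g j = 0 := by
            have : n.choose (kk j) = 0 := Nat.choose_eq_zero_of_lt hnk
            rw [hg]
            simp only [this, Nat.cast_zero, zero_mul]
          rw [hzero, mul_zero]
          exact hbound0
    have hfin : ∑ M ∈ (Finset.univ : Finset (Finset (Fin n))), g M.card ≤ 1 / (n:ℝ) :=
      calc ∑ M ∈ (Finset.univ : Finset (Finset (Fin n))), g M.card
        = ∑ j ∈ Finset.range (n+1), (n.choose j) • g j := hstep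
      _ ≤ ∑ j ∈ Finset.range (n+1), Real.exp (-3) / (n:ℝ)^3 := Finset.sum_le_sum hterm
      _ = (n+1) * (Real.exp (-3) / (n:ℝ)^3) := by
          rw [Finset.sum_const, Finset.card_range, nsmul_eq_mul]; push_cast; ring
      _ ≤ 1 / n := by
          have hexp3 : Real.exp (-3) ≤ 1/4 := by
            have h4 : (4:ℝ) ≤ Real.exp 3 := by
              have := Real.add_one_le_exp (3:ℝ); linarith
            calc Real.exp (-3) = (Real.exp 3)⁻¹ := Real.exp_neg 3
              _ ≤ 4⁻¹ := inv_anti₀ (by norm_num) h4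
              _ = 1/4 := by norm_num
          have h1 : (1:ℝ) ≤ n := by exact_mod_cast hn
          rw [← mul_div_assoc, div_le_div_iff₀ (by positivity) hn0]
          have h2 : ((n:ℝ)+1) * Real.exp (-3) * n ≤ ((n:ℝ)+1) * (1/4) * n := by
            apply mul_le_mul_of_nonneg_right _ (by linarith)
            exact mul_le_mul_of_nonneg_left hexp3 (by linarith)
          have hn2 : (n:ℝ) ≤ (n:ℝ)^2 := by nlinarith
          have hn3 : (n:ℝ)^2 ≤ (n:ℝ)^3 := by nlinarith
          nlinarith
    exact hfin
  -- Step 4 : measure of complement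
  have hAc : μ Aᶜ ≤ ENNReal.ofReal (1/n) := by
    calc μ Aᶜ ≤ μ (⋃ M ∈ (Finset.univ : Finset (Finset (Fin n))), bad M) := measure_mono hsub
      _ ≤ ∑ M ∈ (Finset.univ : Finset (Finset (Fin n))), μ (bad M) :=
          measure_biUnion_finset_le _ _
      _ ≤ ∑ M ∈ (Finset.univ : Finset (Finset (Fin n))),
            ENNReal.ofReal ((n.choose (kk M.card) : ℝ) * ((M.card : ℝ)/n) ^ (kk M.card)) :=
          Finset.sum_le_sum (fun M _ => hbadle M)
      _ = ENNReal.ofReal (∑ M ∈ (Finset.univ : Finset (Finset (Fin n))),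
            (n.choose (kk M.card) : ℝ) * ((M.card : ℝ)/n) ^ (kk M.card)) := by
          rw [ENNReal.ofReal_sum_of_nonneg (fun M _ => by positivity)]
      _ ≤ ENNReal.ofReal (1/n) := ENNReal.ofReal_le_ofReal hrealsum
  -- Step 5 : conclusion
  have hone : (1:ENNReal) ≤ μ A + μ Aᶜ := by
    rw [← measure_univ (μ := μ), ← Set.union_compl_self A]
    exact measure_union_le A Aᶜ
  have hAcne : μ Aᶜ ≠ ⊤ := measure_ne_top μ _
  have hsplit : ENNReal.ofReal (1 - 1/n) + ENNReal.ofReal (1/n) = 1 := by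
    have h1 : (1:ℝ)/n ≤ 1 := by
      rw [div_le_one hn0]; exact_mod_cast hn
    rw [← ENNReal.ofReal_add (by linarith) (by positivity)]
    norm_num
  have : ENNReal.ofReal (1 - 1/n) + μ Aᶜ ≤ μ A + μ Aᶜ := by
    calc ENNReal.ofReal (1 - 1/n) + μ Aᶜ
        ≤ ENNReal.ofReal (1 - 1/n) + ENNReal.ofReal (1/n) := by
          exact add_le_add (le_refl _) hAc
      _ = 1 := hsplit
      _ ≤ μ A + μ Aᶜ := hone
  exact (ENNReal.add_le_add_iff_right hAcne).mp this
end

section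
/- Let V ⊆ ℝⁿ be a vector subspace and define Δ(V) = sup over unit vectors v ∈ V of √n/‖v‖₁. Then (1) if V is (m, ρ)-spread then Δ(V) ≤ (1/ρ²)·√(n/m), and (2) V is (n/(2Δ(V)²), 1/(4Δ(V)))-spread. -/
lemma sqrt_sum_sq_le_sum_abs {ι : Type*} (s : Finset ι) (v : ι → ℝ) :
    Real.sqrt (∑ i ∈ s, v i ^ 2) ≤ ∑ i ∈ s, |v i| := by
  have h : ∑ i ∈ s, v i ^ 2 ≤ (∑ i ∈ s, |v i|) ^ 2 := by
    calc ∑ i ∈ s, v i ^ 2 = ∑ i ∈ s, |v i| ^ 2 := by simp [sq_abs]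
    _ ≤ _ := Finset.sum_sq_le_sq_sum_of_nonneg fun i _ => abs_nonneg _
  calc Real.sqrt (∑ i ∈ s, v i ^ 2) ≤ Real.sqrt ((∑ i ∈ s, |v i|) ^ 2) :=
      Real.sqrt_le_sqrt h
  _ = _ := Real.sqrt_sq (by positivity)

lemma sum_abs_le_sqrt_card_mul {ι : Type*} (s : Finset ι) (v : ι → ℝ) :
    ∑ i ∈ s, |v i| ≤ Real.sqrt s.card * Real.sqrt (∑ i ∈ s, v i ^ 2) := by
  have h : (∑ i ∈ s, |v i|) ^ 2 ≤ (s.card : ℝ) * ∑ i ∈ s, v i ^ 2 := by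
    have := Finset.sum_mul_sq_le_sq_mul_sq s (fun _ => (1:ℝ)) (fun i => |v i|)
    simpa [sq_abs] using this
  calc ∑ i ∈ s, |v i| = Real.sqrt ((∑ i ∈ s, |v i|) ^ 2) :=
      (Real.sqrt_sq (by positivity)).symm
  _ ≤ Real.sqrt ((s.card : ℝ) * ∑ i ∈ s, v i ^ 2) := Real.sqrt_le_sqrt h
  _ = _ := Real.sqrt_mul (by positivity) _



lemma key1 {n : ℕ} {V : Submodule ℝ (Fin n → ℝ)} {m ρ : ℝ} (hm : 0 < m) (hρ : 0 < ρ)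
    (hsp : IsSpread V m ρ) {v : Fin n → ℝ} (hv : v ∈ V) (hv2 : ∑ i, v i ^ 2 = 1) :
    ρ * Real.sqrt m ≤ ∑ i, |v i| := by
  set θ := ρ / Real.sqrt m with hθdef
  have hsm : 0 < Real.sqrt m := Real.sqrt_pos.2 hm
  have hθ : 0 < θ := div_pos hρ hsm
  have hmm : Real.sqrt m * Real.sqrt m = m := Real.mul_self_sqrt hm.le
  set T := Finset.univ.filter (fun i => θ ≤ |v i|) with hT
  have habs : ∀ i, 0 ≤ |v i| := fun i => abs_nonneg _
  by_cases hc : (T.card : ℝ) ≤ m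
  · have hcard : (n:ℝ) - m ≤ (Tᶜ.card : ℝ) := by
      have hTn : T.card ≤ n := by simpa using Finset.card_le_univ T
      have : (Tᶜ.card : ℝ) = n - T.card := by
        rw [Finset.card_compl, Fintype.card_fin, Nat.cast_sub hTn]
      rw [this]; linarith
    have h1 := hsp v hv Tᶜ hcard
    rw [hv2, Real.sqrt_one, mul_one] at h1
    have hsnn : (0:ℝ) ≤ ∑ i ∈ Tᶜ, v i ^ 2 := by positivity
    have h2 : ρ^2 ≤ ∑ i ∈ Tᶜ, v i ^ 2 := by
      have := Real.sq_sqrt hsnn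
      nlinarith [Real.sqrt_nonneg (∑ i ∈ Tᶜ, v i ^ 2)]
    have h3 : ∑ i ∈ Tᶜ, v i ^ 2 ≤ θ * ∑ i ∈ Tᶜ, |v i| := by
      rw [Finset.mul_sum]
      refine Finset.sum_le_sum fun i hi => ?_
      have hlt : |v i| < θ := by
        have := Finset.mem_compl.1 hi
        simp only [hT, Finset.mem_filter, Finset.mem_univ, true_and] at this
        linarith [not_le.1 this]
      calc v i ^ 2 = |v i| * |v i| := by rw [← sq_abs]; ring
      _ ≤ θ * |v i| := mul_le_mul_of_nonneg_right hlt.le (habs i)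
    have h4 : ∑ i ∈ Tᶜ, |v i| ≤ ∑ i, |v i| :=
      Finset.sum_le_sum_of_subset_of_nonneg (Finset.subset_univ _) fun i _ _ => habs i
    have h5 : ρ^2 ≤ θ * ∑ i, |v i| := by
      refine h2.trans (h3.trans ?_)
      exact mul_le_mul_of_nonneg_left h4 hθ.le
    have hθeq : θ * (ρ * Real.sqrt m) = ρ^2 := by
      rw [hθdef]; field_simp
    nlinarith
  · push_neg at hc
    have h2 : θ * (T.card : ℝ) ≤ ∑ i ∈ T, |v i| := by
      calc θ * (T.card : ℝ) = ∑ _i ∈ T, θ := by rw [Finset.sum_const, nsmul_eq_mul]; ring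
      _ ≤ ∑ i ∈ T, |v i| := Finset.sum_le_sum fun i hi =>
          (Finset.mem_filter.1 hi).2
    have h3 : ∑ i ∈ T, |v i| ≤ ∑ i, |v i| :=
      Finset.sum_le_sum_of_subset_of_nonneg (Finset.subset_univ _) fun i _ _ => habs i
    have hθm : θ * m = ρ * Real.sqrt m := by
      rw [hθdef]; field_simp; nlinarith
    nlinarith

set_option maxHeartbeats 1000000 in
theorem spread_vs_distortion {n : ℕ} (V : Submodule ℝ (Fin n → ℝ)) (Δ : ℝ)
    (hΔ : Δ = sSup {x : ℝ | ∃ v ∈ V, (∑ i, v i ^ 2 = 1) ∧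
      x = Real.sqrt n / ∑ i, |v i|}) :
    (∀ m ρ : ℝ, 0 < m → 0 < ρ → IsSpread V m ρ →
      Δ ≤ 1 / ρ ^ 2 * Real.sqrt ((n : ℝ) / m)) ∧
    IsSpread V ((n : ℝ) / (2 * Δ ^ 2)) (1 / (4 * Δ)) := by
  constructor
  · intro m ρ hm hρ hsp
    rw [hΔ]
    apply Real.sSup_le
    · rintro x ⟨v, hv, hv2, rfl⟩
      have hρ1 : ρ ≤ 1 := by
        have hcu : ((n:ℝ) - m ≤ ((Finset.univ : Finset (Fin n)).card : ℝ)) := by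
          simp; linarith
        have := hsp v hv Finset.univ hcu
        rw [hv2] at this
        simpa using this
      have hk := key1 hm hρ hsp hv hv2
      have hsm : 0 < Real.sqrt m := Real.sqrt_pos.2 hm
      have hL : 0 < ∑ i, |v i| := lt_of_lt_of_le (by positivity) hk
      have hdiv : Real.sqrt ((n:ℝ)/m) = Real.sqrt n / Real.sqrt m :=
        Real.sqrt_div (by positivity) m
      rw [hdiv]
      calc Real.sqrt n / ∑ i, |v i| ≤ Real.sqrt n / (ρ * Real.sqrt m) := by
            gcongr
      _ ≤ 1 / ρ ^ 2 * (Real.sqrt n / Real.sqrt m) := by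
            have hq : 1 / ρ ^ 2 * (Real.sqrt n / Real.sqrt m)
                = Real.sqrt n / (ρ^2 * Real.sqrt m) := by
              field_simp
            rw [hq, div_le_div_iff₀ (by positivity) (by positivity)]
            nlinarith [mul_nonneg (mul_nonneg (Real.sqrt_nonneg (n:ℝ)) hsm.le) hρ.le]
    · positivity
  · intro v hv S hS
    by_cases h0 : ∑ i, v i ^ 2 = 0
    · rw [h0, Real.sqrt_zero, mul_zero]
      exact Real.sqrt_nonneg _
    · have hsum_nn : (0:ℝ) ≤ ∑ i, v i ^ 2 := by positivity
      set a := Real.sqrt (∑ i, v i ^ 2) with ha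
      have ha2 : a ^ 2 = ∑ i, v i ^ 2 := Real.sq_sqrt hsum_nn
      have hapos : 0 < a := Real.sqrt_pos.2 (lt_of_le_of_ne hsum_nn (Ne.symm h0))
      set u : Fin n → ℝ := a⁻¹ • v with hu
      have huV : u ∈ V := V.smul_mem _ hv
      have hui : ∀ i, v i = a * u i := by
        intro i
        have : u i = a⁻¹ * v i := rfl
        rw [this]; field_simp
      have hu2 : ∑ i, u i ^ 2 = 1 := by
        have h1 : ∑ i, u i ^ 2 = a⁻¹ ^ 2 * ∑ i, v i ^ 2 := by
          rw [Finset.mul_sum]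
          refine Finset.sum_congr rfl fun i _ => ?_
          have : u i = a⁻¹ * v i := rfl
          rw [this]; ring
        rw [h1, ← ha2]; field_simp
      set L := ∑ i, |u i| with hLdef
      have hL1 : 1 ≤ L := by
        have := sqrt_sum_sq_le_sum_abs Finset.univ u
        rw [hu2, Real.sqrt_one] at this
        exact this
      have hLn : L ≤ Real.sqrt n := by
        have := sum_abs_le_sqrt_card_mul Finset.univ u
        rw [hu2, Real.sqrt_one, mul_one] at this
        simpa using this
      have hn1 : (1:ℝ) ≤ Real.sqrt n := le_trans hL1 hLn
      have hnpos : (0:ℝ) < Real.sqrt n := lt_of_lt_of_le one_pos hn1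
      have hLpos : 0 < L := lt_of_lt_of_le one_pos hL1
      have hbdd : BddAbove {x : ℝ | ∃ v ∈ V, (∑ i, v i ^ 2 = 1) ∧
          x = Real.sqrt n / ∑ i, |v i|} := by
        refine ⟨Real.sqrt n, ?_⟩
        rintro x ⟨w, hw, hw2, rfl⟩
        have h1 : 1 ≤ ∑ i, |w i| := by
          have := sqrt_sum_sq_le_sum_abs Finset.univ w
          rw [hw2, Real.sqrt_one] at this
          exact this
        exact div_le_self (Real.sqrt_nonneg n) h1
      have hmem : Real.sqrt n / L ∈ {x : ℝ | ∃ v ∈ V, (∑ i, v i ^ 2 = 1) ∧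
          x = Real.sqrt n / ∑ i, |v i|} := ⟨u, huV, hu2, rfl⟩
      have hxΔ : Real.sqrt n / L ≤ Δ := by
        have := le_csSup hbdd hmem
        rwa [← hΔ] at this
      have hΔ1 : 1 ≤ Δ := by
        refine le_trans ?_ hxΔ
        rw [le_div_iff₀ hLpos, one_mul]; exact hLn
      have hΔpos : 0 < Δ := lt_of_lt_of_le one_pos hΔ1
      -- k1
      have k1 : Real.sqrt n ≤ Δ * L := by
        have := (div_le_iff₀ hLpos).1 hxΔ
        linarith [this]
      -- card facts
      have hcardS : (S.card : ℝ) ≤ n := by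
        have := Finset.card_le_univ S
        simp only [Finset.card_univ, Fintype.card_fin] at this
        exact_mod_cast this
      have hScardn : S.card ≤ n := by exact_mod_cast hcardS
      have hSc : ((Sᶜ.card : ℝ)) = n - S.card := by
        rw [Finset.card_compl, Fintype.card_fin, Nat.cast_sub hScardn]
      have hScb : (Sᶜ.card : ℝ) ≤ (n:ℝ) / (2 * Δ^2) := by
        rw [hSc]; linarith
      set B := ∑ i ∈ Sᶜ, |u i| with hB
      set A := ∑ i ∈ S, |u i| with hA
      set R := Real.sqrt (∑ i ∈ S, u i ^ 2) with hR
      have hRnn : 0 ≤ R := Real.sqrt_nonneg _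
      have hBnn : 0 ≤ B := Finset.sum_nonneg fun i _ => abs_nonneg _
      have hAnn : 0 ≤ A := Finset.sum_nonneg fun i _ => abs_nonneg _
      -- k2 : B * (√2 * Δ) ≤ √n
      have hBsub : Real.sqrt (∑ i ∈ Sᶜ, u i ^ 2) ≤ 1 := by
        rw [show (1:ℝ) = Real.sqrt 1 from (Real.sqrt_one).symm]
        apply Real.sqrt_le_sqrt
        rw [← hu2]
        exact Finset.sum_le_sum_of_subset_of_nonneg (Finset.subset_univ _)
          fun i _ _ => sq_nonneg _
      have hBle : B ≤ Real.sqrt ((n:ℝ) / (2 * Δ^2)) := by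
        calc B ≤ Real.sqrt (Sᶜ.card) * Real.sqrt (∑ i ∈ Sᶜ, u i ^ 2) :=
            sum_abs_le_sqrt_card_mul Sᶜ u
        _ ≤ Real.sqrt ((n:ℝ) / (2 * Δ^2)) * 1 :=
            mul_le_mul (Real.sqrt_le_sqrt hScb) hBsub (Real.sqrt_nonneg _)
              (Real.sqrt_nonneg _)
        _ = _ := mul_one _
      have h4 : Real.sqrt ((n:ℝ)/(2*Δ^2)) = Real.sqrt n / (Real.sqrt 2 * Δ) := by
        rw [Real.sqrt_div (by positivity), Real.sqrt_mul (by norm_num), Real.sqrt_sq hΔpos.le]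
      have k2 : B * (Real.sqrt 2 * Δ) ≤ Real.sqrt n := by
        have := mul_le_mul_of_nonneg_right (hBle.trans_eq h4)
          (show (0:ℝ) ≤ Real.sqrt 2 * Δ by positivity)
        rwa [div_mul_cancel₀ _ (by positivity : Real.sqrt 2 * Δ ≠ 0)] at this
      -- k3
      have k3 : A ≤ Real.sqrt n * R := by
        calc A ≤ Real.sqrt (S.card) * R := sum_abs_le_sqrt_card_mul S u
        _ ≤ Real.sqrt n * R :=
            mul_le_mul_of_nonneg_right (Real.sqrt_le_sqrt hcardS) hRnn
      have k4 : A + B = L := Finset.sum_add_sum_compl S _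
      -- numeric
      have hs2 : Real.sqrt 2 ^ 2 = 2 := Real.sq_sqrt (by norm_num)
      have hs0 : (0:ℝ) ≤ Real.sqrt 2 := Real.sqrt_nonneg 2
      have hs43 : 4/3 ≤ Real.sqrt 2 := by nlinarith
      have e2 : Δ * B ≤ (3/4) * Real.sqrt n := by
        have h5 : (4/3) * (Δ * B) ≤ B * (Real.sqrt 2 * Δ) := by
          calc (4/3) * (Δ * B) ≤ Real.sqrt 2 * (Δ * B) :=
              mul_le_mul_of_nonneg_right hs43 (mul_nonneg hΔpos.le hBnn)
          _ = B * (Real.sqrt 2 * Δ) := by ring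
        linarith
      have e1 : Δ * A ≤ Δ * (Real.sqrt n * R) := mul_le_mul_of_nonneg_left k3 hΔpos.le
      have e0 : Δ * L = Δ * A + Δ * B := by rw [← k4]; ring
      have e3 : Real.sqrt n / 4 ≤ Δ * (Real.sqrt n * R) := by linarith
      have hRge : 1/(4*Δ) ≤ R := by
        rw [div_le_iff₀ (by positivity)]
        have h6 : Real.sqrt n * 1 ≤ Real.sqrt n * (R * (4*Δ)) := by linarith
        exact le_of_mul_le_mul_left h6 hnpos
      -- conclude
      have hSv : Real.sqrt (∑ i ∈ S, v i ^ 2) = a * R := by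
        have hsum : ∑ i ∈ S, v i ^ 2 = a^2 * ∑ i ∈ S, u i ^ 2 := by
          rw [Finset.mul_sum]
          exact Finset.sum_congr rfl fun i _ => by rw [hui i]; ring
        rw [hsum, Real.sqrt_mul (sq_nonneg a), Real.sqrt_sq hapos.le]
      rw [hSv]
      have := mul_le_mul_of_nonneg_left hRge hapos.le
      linarith
end
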